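/- arXiv:1402.0433 — 8 statements merged into one kernel-verified Lean document; each statement's English description precedes it below -/
import Mathlib

section
/- For all nonnegative integers $n$ and $d$ with $n \ge d+1$, $\sum_{i} \binom{2n}{2i+1}\binom{i}{n-d-1} = 2^{2d+1}\binom{n+d}{2d+1}$. -/
open Finset

private def Sb (N m : ℕ) : ℕ := ∑ i ∈ range (N+1), Nat.choose N (2*i+1) * Nat.choose i m
private def Tb (N m : ℕ) : ℕ := ∑ i ∈ range (N+1), Nat.choose N (2*i) * Nat.choose i m

private lemma sum_S_eq (N m : ℕ) {M M' : ℕ} (h : N ≤ 2*M) (h2 : M ≤ M') :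
    ∑ i ∈ range M', Nat.choose N (2*i+1) * Nat.choose i m
      = ∑ i ∈ range M, Nat.choose N (2*i+1) * Nat.choose i m := by
  refine (Finset.sum_subset (Finset.range_subset_range.2 h2) ?_).symm
  intro i hi hni
  simp only [mem_range, not_lt] at hni
  have : N < 2*i+1 := by omega
  simp [Nat.choose_eq_zero_of_lt this]

private lemma sum_T_eq (N m : ℕ) {M M' : ℕ} (h : N < 2*M) (h2 : M ≤ M') :
    ∑ i ∈ range M', Nat.choose N (2*i) * Nat.choose i m
      = ∑ i ∈ range M, Nat.choose N (2*i) * Nat.choose i m := by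
  refine (Finset.sum_subset (Finset.range_subset_range.2 h2) ?_).symm
  intro i hi hni
  simp only [mem_range, not_lt] at hni
  have : N < 2*i := by omega
  simp [Nat.choose_eq_zero_of_lt this]

private lemma Sb_zero (N m : ℕ) (h : N ≤ 2*m) : Sb N m = 0 := by
  unfold Sb
  refine Finset.sum_eq_zero fun i _ => ?_
  rcases lt_or_ge N (2*i+1) with hlt | hge
  · simp [Nat.choose_eq_zero_of_lt hlt]
  · have : i < m := by omega
    simp [Nat.choose_eq_zero_of_lt this]

private lemma Sb_succ (N m : ℕ) : Sb (N+1) m = Tb N m + Sb N m := by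
  have h1 : Sb (N+1) m = ∑ i ∈ range (N+1), Nat.choose (N+1) (2*i+1) * Nat.choose i m := by
    unfold Sb; exact sum_S_eq (N+1) m (by omega) (by omega)
  rw [h1]
  unfold Tb Sb
  rw [← Finset.sum_add_distrib]
  refine Finset.sum_congr rfl fun i _ => ?_
  rw [Nat.choose_succ_succ, add_mul]

private lemma Tb_succ (N m : ℕ) :
    Tb (N+1) m = Tb N m + ∑ j ∈ range (N+1), Nat.choose N (2*j+1) * Nat.choose (j+1) m := by
  have hT : Tb N m = ∑ i ∈ range (N+2), Nat.choose N (2*i) * Nat.choose i m := by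
    unfold Tb; exact (sum_T_eq N m (by omega) (by omega)).symm
  have hL : Tb (N+1) m = ∑ k ∈ range (N+1), Nat.choose (N+1) (2*(k+1)) * Nat.choose (k+1) m
      + Nat.choose (N+1) (2*0) * Nat.choose 0 m := by
    unfold Tb
    exact Finset.sum_range_succ' (fun i => Nat.choose (N+1) (2*i) * Nat.choose i m) (N+1)
  have hR : Tb N m = ∑ k ∈ range (N+1), Nat.choose N (2*(k+1)) * Nat.choose (k+1) m
      + Nat.choose N (2*0) * Nat.choose 0 m := by
    rw [hT]
    exact Finset.sum_range_succ' (fun i => Nat.choose N (2*i) * Nat.choose i m) (N+1)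
  have key : ∀ j : ℕ, Nat.choose (N+1) (2*(j+1)) * Nat.choose (j+1) m
      = Nat.choose N (2*(j+1)) * Nat.choose (j+1) m
        + Nat.choose N (2*j+1) * Nat.choose (j+1) m := by
    intro j
    have h2 : 2*(j+1) = (2*j+1) + 1 := by ring
    rw [h2, Nat.choose_succ_succ, add_mul]
    ring
  rw [hL, hR]
  simp only [key]
  rw [Finset.sum_add_distrib]
  simp only [Nat.mul_zero, Nat.choose_zero_right]
  ring

private lemma Sb_rec (N m : ℕ) :
    Sb (N+2) (m+1) = 2 * Sb (N+1) (m+1) + Sb N m := by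
  have hU : ∑ j ∈ range (N+1), Nat.choose N (2*j+1) * Nat.choose (j+1) (m+1)
      = Sb N m + Sb N (m+1) := by
    unfold Sb
    rw [← Finset.sum_add_distrib]
    refine Finset.sum_congr rfl fun j _ => ?_
    rw [Nat.choose_succ_succ, mul_add]
  have h1 := Sb_succ (N+1) (m+1)
  have h2 := Tb_succ N (m+1)
  have h3 := Sb_succ N (m+1)
  rw [h1, h2, hU, ]
  omega

private lemma Tb_succ_zero (N : ℕ) : Tb (N+1) 0 = Tb N 0 + Sb N 0 := by
  have := Tb_succ N 0
  simpa [Sb, Nat.choose_zero_right] using this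

private lemma base_zero : ∀ k : ℕ, Sb (k+1) 0 = 2^k ∧ Tb (k+1) 0 = 2^k := by
  intro k
  induction k with
  | zero => constructor <;> decide
  | succ k ih =>
    obtain ⟨hS, hT⟩ := ih
    constructor
    · rw [show k+1+1 = (k+1)+1 by rfl, Sb_succ, hS, hT]; ring
    · rw [show k+1+1 = (k+1)+1 by rfl, Tb_succ_zero, hS, hT]; ring

private lemma main_formula : ∀ m k : ℕ, Sb (2*m+1+k) m = 2^k * Nat.choose (m+k) m := by
  intro m
  induction m with
  | zero =>
    intro k
    have := (base_zero k).1
    rw [show 2*0+1+k = k+1 by ring]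
    simpa [Nat.choose_zero_right] using this
  | succ m ihm =>
    intro k
    induction k with
    | zero =>
      have h0 : 2*(m+1)+1+0 = (2*m+1)+2 := by ring
      rw [h0, Sb_rec]
      have hz : Sb (2*m+1+1) (m+1) = 0 := Sb_zero _ _ (by omega)
      have h1 : Sb (2*m+1) m = 1 := by
        have := ihm 0
        simpa using this
      rw [show (2*m+1)+1 = 2*m+1+1 by rfl] at hz
      rw [hz, h1]
      simp
    | succ k ihk =>
      have h0 : 2*(m+1)+1+(k+1) = (2*m+2+k)+2 := by ring
      rw [h0, Sb_rec]
      have h1 : Sb (2*m+2+k+1) (m+1) = 2^k * Nat.choose (m+1+k) (m+1) := by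
        have := ihk
        rw [show 2*(m+1)+1+k = 2*m+2+k+1 by ring] at this
        exact this
      have h2 : Sb (2*m+2+k) m = 2^(k+1) * Nat.choose (m+(k+1)) m := by
        have := ihm (k+1)
        rw [show 2*m+1+(k+1) = 2*m+2+k by ring] at this
        exact this
      rw [h1, h2]
      have hp : Nat.choose (m+1+(k+1)) (m+1)
          = Nat.choose (m+k+1) m + Nat.choose (m+k+1) (m+1) := by
        rw [show m+1+(k+1) = (m+k+1)+1 by ring, Nat.choose_succ_succ]
      rw [hp]
      rw [show m+(k+1) = m+k+1 by ring, show m+1+k = m+k+1 by ring]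
      ring

theorem binom_sum_identity (n d : ℕ) (h : d + 1 ≤ n) :
    ∑ i ∈ Finset.range (n + 1), Nat.choose (2 * n) (2 * i + 1) * Nat.choose i (n - d - 1)
      = 2 ^ (2 * d + 1) * Nat.choose (n + d) (2 * d + 1) := by
  set m := n - d - 1 with hm
  have hS : ∑ i ∈ Finset.range (n + 1), Nat.choose (2 * n) (2 * i + 1) * Nat.choose i m
      = Sb (2*n) m := by
    unfold Sb
    exact (sum_S_eq (2*n) m (M := n+1) (by omega) (by omega)).symm
  rw [hS]
  have hkey : Sb (2*n) m = 2^(2*d+1) * Nat.choose (m + (2*d+1)) m := by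
    have := main_formula m (2*d+1)
    rw [show 2*m+1+(2*d+1) = 2*n by omega] at this
    exact this
  rw [hkey]
  congr 1
  have h1 : m + (2*d+1) = n + d := by omega
  rw [h1]
  have h2 : m = (n+d) - (2*d+1) := by omega
  rw [h2]
  exact Nat.choose_symm (by omega)
end

section
/- For all nonnegative integers $x$ and positive integers $n$ with $x \ge n$, the rational number $\frac{1}{n!}\sum_{j \text{ odd}, 0 \le j \le n} \binom{n}{j} j^x$ differs from $(-1)^{n+1} S(x,n)$ by a rational number of 2-adic valuation at least $x - \nu(n!)$, where $S(x,n)$ is the Stirling number of the second kind. -/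
/-- `P n x = (1/n!) ∑_{j odd, 0 ≤ j ≤ n} C(n,j) j^x`. -/
def P (n x : ℕ) : ℚ :=
  (1 / (Nat.factorial n : ℚ)) *
    ∑ j ∈ Finset.range (n + 1), if Odd j then (Nat.choose n j : ℚ) * (j : ℚ) ^ x else 0

/-- Stirling number of the second kind, via the alternating sum formula. -/
def Stir (x n : ℕ) : ℚ :=
  (1 / (Nat.factorial n : ℚ)) *
    ∑ j ∈ Finset.range (n + 1), (-1 : ℚ) ^ (n - j) * (Nat.choose n j : ℚ) * (j : ℚ) ^ x

theorem P_approx_Stirling (n x : ℕ) (hn : 0 < n) (hx : n ≤ x) :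
    P n x - (-1 : ℚ) ^ (n + 1) * Stir x n = 0 ∨
      padicValRat 2 (P n x - (-1 : ℚ) ^ (n + 1) * Stir x n)
        ≥ (x : ℤ) - padicValNat 2 (Nat.factorial n) := by
  set T : ℕ := ∑ j ∈ Finset.range (n + 1),
      if Even j then Nat.choose n j * (j / 2) ^ x else 0 with hT
  have hxpos : 0 < x := lt_of_lt_of_le hn hx
  have hD : P n x - (-1 : ℚ) ^ (n + 1) * Stir x n
      = (2 : ℚ) ^ x * (T : ℚ) / (Nat.factorial n : ℚ) := by
    rw [P, Stir, mul_left_comm, ← mul_sub, Finset.mul_sum, ← Finset.sum_sub_distrib]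
    rw [div_eq_mul_inv, mul_comm, ← one_div]
    congr 1
    swap
    · rw [one_mul, one_div]; rfl
    push_cast [hT, Finset.mul_sum]
    apply Finset.sum_congr rfl
    intro j hj
    have hjn : j ≤ n := Nat.lt_succ_iff.mp (Finset.mem_range.mp hj)
    have hsign : ((-1:ℚ))^(n+1) * (-1)^(n-j) = (-1)^(j+1) := by
      have h : (n+1) + (n-j) = (j+1) + 2*(n-j) := by omega
      rw [← pow_add, h, pow_add, pow_mul]
      simp
    rw [show ((-1:ℚ))^(n+1) * ((-1:ℚ)^(n-j) * (Nat.choose n j : ℚ) * (j:ℚ)^x)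
        = ((-1:ℚ)^(n+1) * (-1:ℚ)^(n-j)) * ((Nat.choose n j : ℚ) * (j:ℚ)^x) by ring,
      hsign]
    rcases Nat.even_or_odd j with he | ho
    · have hno : ¬ Odd j := by simp [Nat.not_odd_iff_even.mpr he]
      have h2 : (j : ℚ) = 2 * ((j / 2 : ℕ) : ℚ) := by
        obtain ⟨k, hk⟩ := he
        subst hk
        push_cast [Nat.mul_div_cancel_left, show k + k = 2 * k by ring]
        ring
      simp only [if_pos he, if_neg hno, pow_succ, he.neg_one_pow]
      rw [h2, mul_pow]
      ring
    · have hne : ¬ Even j := Nat.not_even_iff_odd.mpr ho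
      simp only [if_pos ho, if_neg hne, pow_succ, ho.neg_one_pow]
      ring
  rcases Nat.eq_zero_or_pos T with hT0 | hTpos
  · left; rw [hD, hT0]; simp
  · right
    rw [hD]
    have hfac : (Nat.factorial n : ℚ) ≠ 0 := by
      exact_mod_cast (Nat.factorial_pos n).ne'
    have hTne : T ≠ 0 := hTpos.ne'
    have hnum : ((2 ^ x * T : ℕ) : ℚ) ≠ 0 := by
      have : 0 < 2 ^ x * T := Nat.mul_pos (Nat.pow_pos (n := x) (by norm_num)) hTpos
      exact_mod_cast this.ne'
    have hcast : (2 : ℚ) ^ x * (T : ℚ) = ((2 ^ x * T : ℕ) : ℚ) := by push_cast; ring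
    rw [hcast, padicValRat.div (p := 2) hnum hfac, padicValRat.of_nat, padicValRat.of_nat,
      padicValNat.mul (p := 2) (pow_ne_zero x two_ne_zero) hTne,
      padicValNat.prime_pow, Nat.cast_add]
    omega
end

section
/- For any nonnegative integers $n$ and $s$, the 2-adic valuation of $\Phi_n(s) := \frac{1}{n!}\sum_{i \ge 0} \binom{n}{2i+1}(2i)^s$ is at least $s - \lfloor n/2 \rfloor$. -/
open Finset Nat

def Gs (n k : ℕ) : ℕ := ∑ i ∈ Finset.range (n+1), n.choose (2*i+1) * i.choose k
def Hs (n k : ℕ) : ℕ := ∑ i ∈ Finset.range (n+1), n.choose (2*i) * i.choose k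

lemma key : ∀ n k : ℕ, Gs (n+1) k * 2^(2*k+1) = 2^(n+1) * Nat.choose (n-k) k ∧
    Hs (n+1) k * 2^(2*k+1) + 2^(n+1) * Nat.choose (n-k) k = 2^(n+2) * Nat.choose (n+1-k) k := by
  intro n
  induction n with
  | zero =>
    intro k
    have hg : Gs 1 k = Nat.choose 0 k := by
      simp [Gs, Finset.sum_range_succ, show Nat.choose 1 3 = 0 from rfl]
    have hh : Hs 1 k = Nat.choose 0 k := by
      simp [Hs, Finset.sum_range_succ, show Nat.choose 1 2 = 0 from rfl]
    rw [hg, hh] at *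
    constructor
    · match k with
      | 0 => rfl
      | k+1 => simp [Nat.choose_zero_succ, Nat.zero_sub]
    · match k with
      | 0 => rfl
      | k+1 =>
        rw [Nat.zero_sub, show 0+1-(k+1) = 0 from by omega]
        simp [Nat.choose_zero_succ]
  | succ n ih =>
    intro k
    have hG : Gs (n+2) k = Hs (n+1) k + Gs (n+1) k := by
      unfold Gs Hs
      rw [Finset.sum_range_succ, Nat.choose_eq_zero_of_lt (by omega), zero_mul, add_zero,
        ← Finset.sum_add_distrib]
      refine Finset.sum_congr rfl fun i _ => ?_
      rw [Nat.choose_succ_succ (n+1) (2*i), add_mul]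
    have hH : Hs (n+2) k = (∑ i ∈ Finset.range (n+2), (n+1).choose (2*i+1) * (i+1).choose k)
        + Hs (n+1) k := by
      have h2 : (∑ i ∈ Finset.range (n+2), (n+1).choose (2*(i+1)) * (i+1).choose k)
          + (n+2).choose (2*0) * Nat.choose 0 k = Hs (n+1) k := by
        unfold Hs
        rw [show n+1+1 = n+2 from rfl,
          Finset.sum_range_succ' (fun i => (n+1).choose (2*i) * i.choose k) (n+1)]
        congr 1
        rw [Finset.sum_range_succ, Nat.choose_eq_zero_of_lt (by omega), zero_mul, add_zero]
      have h3 : ∀ i, (n+2).choose (2*(i+1)) * (i+1).choose k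
          = (n+1).choose (2*i+1) * (i+1).choose k + (n+1).choose (2*(i+1)) * (i+1).choose k := by
        intro i
        rw [show 2*(i+1) = (2*i+1)+1 from by ring, Nat.choose_succ_succ (n+1) (2*i+1), add_mul]
      rw [← h2]
      unfold Hs
      rw [show n+2+1 = (n+2)+1 from rfl,
        Finset.sum_range_succ' (fun i => (n+2).choose (2*i) * i.choose k) (n+2),
        Finset.sum_congr rfl fun i _ => h3 i, Finset.sum_add_distrib]
      omega
    constructor
    · rw [hG, add_mul, (ih k).1]
      exact (ih k).2
    · match k with
      | 0 =>
        have hH0 : Hs (n+2) 0 = Gs (n+1) 0 + Hs (n+1) 0 := by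
          rw [hH]; congr 1
          exact Finset.sum_congr rfl fun i _ => by simp [Gs]
        have h1 := (ih 0).1
        have h2 := (ih 0).2
        simp only [Nat.sub_zero, Nat.choose_zero_right, mul_one] at h1 h2 ⊢
        rw [hH0]
        rw [show n+1+1 = n+2 from rfl, show n+1+2 = n+3 from rfl] at *
        rw [show (2:ℕ)^(n+3) = 4*2^(n+1) from by ring, show (2:ℕ)^(n+2) = 2*2^(n+1) from by ring] at *
        omega
      | k+1 =>
        have hH1 : Hs (n+2) (k+1) = Gs (n+1) k + Gs (n+1) (k+1) + Hs (n+1) (k+1) := by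
          rw [hH]
          have : (∑ i ∈ Finset.range (n+2), (n+1).choose (2*i+1) * (i+1).choose (k+1))
              = Gs (n+1) k + Gs (n+1) (k+1) := by
            unfold Gs
            rw [← Finset.sum_add_distrib]
            refine Finset.sum_congr rfl fun i _ => ?_
            rw [Nat.choose_succ_succ i k, mul_add]
          omega
        have h1 := (ih k).1
        have h2 := (ih (k+1)).1
        have h3 := (ih (k+1)).2
        have pascal : (n+1-k).choose (k+1) = (n-k).choose k + (n-k).choose (k+1) := by
          rcases le_or_gt k n with h | h
          · rw [show n+1-k = (n-k)+1 from by omega]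
            exact Nat.choose_succ_succ _ _
          · have hk : 0 < k := by omega
            rw [show n+1-k = 0 from by omega, show n-k = 0 from by omega,
              Nat.choose_eq_zero_of_lt hk, Nat.choose_eq_zero_of_lt (Nat.succ_pos k)]
        rw [show n+1+1-(k+1) = n+1-k from by omega, show n+1-(k+1) = n-k from by omega,
          show n+1+1 = n+2 from rfl, show n+1+2 = n+3 from rfl]
        rw [hH1, pascal]
        rw [show n+1-(k+1) = n-k from by omega] at h3
        rw [show (2:ℕ)^(2*(k+1)+1) = 4*2^(2*k+1) from by ring] at h2 h3 ⊢
        rw [show (2:ℕ)^(n+3) = 4*2^(n+1) from by ring, show (2:ℕ)^(n+2) = 2*2^(n+1) from by ring] at *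
        zify at h1 h2 h3 ⊢
        linear_combination 4*h1 + h2 + h3
def St : ℕ → ℕ → ℕ
  | 0, 0 => 1
  | 0, _+1 => 0
  | _+1, 0 => 0
  | s+1, k+1 => (k+1) * St s (k+1) + St s k

lemma St_eq_zero : ∀ s k, s < k → St s k = 0 := by
  intro s
  induction s with
  | zero => intro k h; match k, h with | k+1, _ => rfl
  | succ s ih =>
    intro k h
    match k, h with
    | k+1, h =>
      show (k+1) * St s (k+1) + St s k = 0
      rw [ih (k+1) (by omega), ih k (by omega), mul_zero]

lemma pow_eq_sum_St (s i : ℕ) :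
    i ^ s = ∑ k ∈ Finset.range (s+1), St s k * i.descFactorial k := by
  induction s with
  | zero => simp [St]
  | succ s ih =>
    have hstep : ∀ k, i * i.descFactorial k = i.descFactorial (k+1) + k * i.descFactorial k := by
      intro k
      rcases Nat.lt_or_ge i k with h | h
      · simp [Nat.descFactorial_eq_zero_iff_lt.mpr h, Nat.descFactorial_succ]
      · rw [Nat.descFactorial_succ, ← add_mul, Nat.sub_add_cancel h]
    have lhs : i ^ (s+1) = (∑ k ∈ Finset.range (s+1), St s k * i.descFactorial (k+1))
        + ∑ k ∈ Finset.range (s+1), St s k * (k * i.descFactorial k) := by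
      rw [pow_succ, mul_comm, ih, Finset.mul_sum, ← Finset.sum_add_distrib]
      refine Finset.sum_congr rfl fun k _ => ?_
      rw [mul_left_comm, hstep k, mul_add]
    have mid : ∑ k ∈ Finset.range (s+1), St s k * (k * i.descFactorial k)
        = ∑ k ∈ Finset.range (s+1), (k+1) * St s (k+1) * i.descFactorial (k+1) := by
      have e1 : ∑ k ∈ Finset.range (s+2), k * St s k * i.descFactorial k
          = ∑ k ∈ Finset.range (s+1), (k+1) * St s (k+1) * i.descFactorial (k+1) := by
        rw [Finset.sum_range_succ' (fun k => k * St s k * i.descFactorial k) (s+1)]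
        simp
      have e2 : ∑ k ∈ Finset.range (s+2), k * St s k * i.descFactorial k
          = ∑ k ∈ Finset.range (s+1), k * St s k * i.descFactorial k := by
        rw [Finset.sum_range_succ, St_eq_zero s (s+1) (by omega)]
        simp
      rw [← e1, e2]
      refine Finset.sum_congr rfl fun k _ => by ring
    rw [lhs, mid]
    rw [Finset.sum_range_succ' (fun k => St (s+1) k * i.descFactorial k) (s+1)]
    have : St (s+1) 0 * i.descFactorial 0 = 0 := by rfl
    rw [this, add_zero, ← Finset.sum_add_distrib]
    refine Finset.sum_congr rfl fun k _ => ?_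
    show St s k * i.descFactorial (k+1) + (k+1) * St s (k+1) * i.descFactorial (k+1)
      = ((k+1) * St s (k+1) + St s k) * i.descFactorial (k+1)
    ring

lemma v2_even : ∀ m : ℕ, padicValNat 2 ((2*m)!) = m + padicValNat 2 (m !) := by
  intro m
  induction m with
  | zero => simp
  | succ m ih =>
    have h1 : (2*(m+1))! = (2*(m+1)) * ((2*m+1) * (2*m)!) := by
      rw [show 2*(m+1) = (2*m+1)+1 from by ring, Nat.factorial_succ, Nat.factorial_succ]
    rw [h1]
    rw [padicValNat.mul (by omega) (by positivity), padicValNat.mul (by omega) (Nat.factorial_ne_zero _)]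
    have h2 : padicValNat 2 (2*(m+1)) = 1 + padicValNat 2 (m+1) := by
      rw [padicValNat.mul (by omega) (by omega), padicValNat.self (by omega)]
    have h3 : padicValNat 2 (2*m+1) = 0 :=
      padicValNat.eq_zero_of_not_dvd (by omega)
    have h4 : padicValNat 2 ((m+1)!) = padicValNat 2 (m+1) + padicValNat 2 (m !) := by
      rw [Nat.factorial_succ, padicValNat.mul (by omega) (Nat.factorial_ne_zero _)]
    omega

lemma v2_half (n : ℕ) : padicValNat 2 (n !) = n/2 + padicValNat 2 ((n/2)!) := by
  rcases Nat.even_or_odd n with ⟨t, ht⟩ | ⟨t, ht⟩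
  · subst ht
    rw [show t+t = 2*t from by ring, v2_even t, show 2*t/2 = t from by omega]
  · subst ht
    rw [show (2*t+1)/2 = t from by omega, Nat.factorial_succ,
      padicValNat.mul (by omega) (Nat.factorial_ne_zero _),
      padicValNat.eq_zero_of_not_dvd (by omega), v2_even t]
    omega

lemma v2_le_of_dvd {a b : ℕ} (h : a ∣ b) (hb : b ≠ 0) :
    padicValNat 2 a ≤ padicValNat 2 b := by
  obtain ⟨c, rfl⟩ := h
  have ha : a ≠ 0 := by rintro rfl; simp at hb
  have hc : c ≠ 0 := by rintro rfl; simp at hb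
  rw [padicValNat.mul ha hc]
  omega

lemma dvd_k (n k : ℕ) (hn : 1 ≤ n) :
    2^(padicValNat 2 (n !)) ∣ 2^(n/2) * (k ! * Gs n k) := by
  obtain ⟨n', rfl⟩ : ∃ n', n = n'+1 := ⟨n-1, by omega⟩
  have hkey := (key n' k).1
  by_cases hc : (n'-k).choose k = 0
  · have hg : Gs (n'+1) k = 0 := by
      rw [hc, mul_zero] at hkey
      rcases Nat.mul_eq_zero.mp hkey with h | h
      · exact h
      · exact absurd h (by positivity)
    rw [hg, mul_zero, mul_zero]
    exact dvd_zero _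
  · have hk2 : k ≤ n' - k := by
      by_contra h
      exact hc (Nat.choose_eq_zero_of_lt (by omega))
    have hkn : 2*k+1 ≤ n'+1 := by omega
    have f2 : (n'-k).choose k * k ! * ((n'-k) - k)! = (n'-k)! :=
      Nat.choose_mul_factorial_mul_factorial hk2
    have f2v : padicValNat 2 ((n'-k).choose k) + padicValNat 2 (k !)
        + padicValNat 2 (((n'-k)-k)!) = padicValNat 2 ((n'-k)!) := by
      rw [← f2, padicValNat.mul (by positivity) (Nat.factorial_ne_zero _),
        padicValNat.mul (by exact hc) (Nat.factorial_ne_zero _)]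
    have f1 : padicValNat 2 ((n'+1)!) = (n'+1)/2 + padicValNat 2 (((n'+1)/2)!) := v2_half _
    have f3 : padicValNat 2 (((n'-k)-k)!)
        = ((n'-k)-k)/2 + padicValNat 2 ((((n'-k)-k)/2)!) := v2_half _
    have f4 : padicValNat 2 (((n'+1)/2)!) + padicValNat 2 ((((n'-k)-k)/2)!)
        ≤ padicValNat 2 ((n'-k)!) := by
      have hba : (n'+1)/2 ≤ n'-k := by omega
      have hd := Nat.factorial_mul_factorial_dvd_factorial hba
      rw [show n'-k-(n'+1)/2 = ((n'-k)-k)/2 from by omega] at hd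
      have := v2_le_of_dvd hd (Nat.factorial_ne_zero _)
      rwa [padicValNat.mul (Nat.factorial_ne_zero _) (Nat.factorial_ne_zero _)] at this
    have hineq : padicValNat 2 ((n'+1)!) + (2*k+1)
        ≤ (n'+1)/2 + padicValNat 2 (k !) + (n'+1) + padicValNat 2 ((n'-k).choose k) := by
      omega
    have hdvd : 2^(padicValNat 2 ((n'+1)!)) * 2^(2*k+1)
        ∣ 2^((n'+1)/2) * (k ! * Gs (n'+1) k) * 2^(2*k+1) := by
      have hre : 2^((n'+1)/2) * (k ! * Gs (n'+1) k) * 2^(2*k+1)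
          = 2^((n'+1)/2) * (k ! * (2^(n'+1) * (n'-k).choose k)) := by
        rw [← hkey]; ring
      rw [hre, ← pow_add]
      calc 2^(padicValNat 2 ((n'+1)!) + (2*k+1))
          ∣ 2^((n'+1)/2 + padicValNat 2 (k !) + ((n'+1) + padicValNat 2 ((n'-k).choose k))) :=
            pow_dvd_pow 2 (by omega)
        _ = 2^((n'+1)/2) * 2^(padicValNat 2 (k !))
            * (2^(n'+1) * 2^(padicValNat 2 ((n'-k).choose k))) := by
            rw [pow_add, pow_add, pow_add]
        _ ∣ 2^((n'+1)/2) * k ! * (2^(n'+1) * (n'-k).choose k) :=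
            mul_dvd_mul (mul_dvd_mul_left _ pow_padicValNat_dvd)
              (mul_dvd_mul_left _ pow_padicValNat_dvd)
        _ = 2^((n'+1)/2) * (k ! * (2^(n'+1) * (n'-k).choose k)) := by ring
    exact (Nat.mul_dvd_mul_iff_right (show 0 < 2^(2*k+1) by positivity)).mp hdvd

lemma M_eq (n s : ℕ) : ∑ i ∈ Finset.range (n+1), n.choose (2*i+1) * i^s
    = ∑ k ∈ Finset.range (s+1), St s k * (k ! * Gs n k) := by
  have hterm : ∀ k, St s k * (k ! * Gs n k)
      = ∑ i ∈ Finset.range (n+1), n.choose (2*i+1) * (St s k * i.descFactorial k) := by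
    intro k
    unfold Gs
    rw [Finset.mul_sum, Finset.mul_sum]
    refine Finset.sum_congr rfl fun i _ => ?_
    rw [Nat.descFactorial_eq_factorial_mul_choose]
    ring
  rw [Finset.sum_congr rfl fun k _ => hterm k, Finset.sum_comm]
  refine Finset.sum_congr rfl fun i _ => ?_
  rw [pow_eq_sum_St s i, Finset.mul_sum]

lemma final_dvd (n s : ℕ) (hn : 1 ≤ n) :
    2^(s + padicValNat 2 (n !)) ∣ 2^(n/2) * ∑ i ∈ Finset.range (n+1), n.choose (2*i+1) * (2*i)^s := by
  have hN : ∑ i ∈ Finset.range (n+1), n.choose (2*i+1) * (2*i)^s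
      = 2^s * ∑ k ∈ Finset.range (s+1), St s k * (k ! * Gs n k) := by
    rw [← M_eq, Finset.mul_sum]
    refine Finset.sum_congr rfl fun i _ => ?_
    rw [mul_pow]
    ring
  rw [hN, pow_add, show 2^(n/2) * (2^s * ∑ k ∈ Finset.range (s+1), St s k * (k ! * Gs n k))
      = 2^s * (2^(n/2) * ∑ k ∈ Finset.range (s+1), St s k * (k ! * Gs n k)) from by ring]
  refine mul_dvd_mul_left _ ?_
  rw [Finset.mul_sum]
  refine Finset.dvd_sum fun k _ => ?_
  rw [show 2^(n/2) * (St s k * (k ! * Gs n k)) = St s k * (2^(n/2) * (k ! * Gs n k)) from by ring]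
  exact (dvd_k n k hn).mul_left _

/-- `Φ n s = (1/n!) ∑_i C(n, 2i+1) (2i)^s`, with the convention `0^0 = 1`. -/
def Phi (n s : ℕ) : ℚ :=
  (1 / (Nat.factorial n : ℚ)) *
    ∑ i ∈ Finset.range (n + 1), (Nat.choose n (2 * i + 1) : ℚ) * ((2 * i : ℕ) : ℚ) ^ s

theorem Phi_val_lower_bound (n s : ℕ) :
    Phi n s = 0 ∨ padicValRat 2 (Phi n s) ≥ (s : ℤ) - (n / 2 : ℕ) := by
  have hPhi : Phi n s
      = ((∑ i ∈ Finset.range (n+1), n.choose (2*i+1) * (2*i)^s : ℕ) : ℚ) / (n ! : ℚ) := by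
    unfold Phi
    push_cast
    rw [one_div, inv_mul_eq_div]
  by_cases hN : ∑ i ∈ Finset.range (n+1), n.choose (2*i+1) * (2*i)^s = 0
  · left
    rw [hPhi, hN]
    simp
  · right
    have hn : 1 ≤ n := by
      by_contra h
      apply hN
      have : n = 0 := by omega
      subst this
      simp
    haveI : Fact (Nat.Prime 2) := ⟨Nat.prime_two⟩
    have hdvd := final_dvd n s hn
    have hν : s + padicValNat 2 (n !)
        ≤ n/2 + padicValNat 2 (∑ i ∈ Finset.range (n+1), n.choose (2*i+1) * (2*i)^s) := by
      have h2 : 2^(n/2) * ∑ i ∈ Finset.range (n+1), n.choose (2*i+1) * (2*i)^s ≠ 0 := by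
        positivity
      have := (padicValNat_dvd_iff_le h2).mp hdvd
      rwa [padicValNat.mul (by positivity) hN, padicValNat.prime_pow] at this
    rw [hPhi, padicValRat.div (p := 2) (by exact_mod_cast hN)
      (by exact_mod_cast Nat.factorial_ne_zero n), padicValRat.of_nat, padicValRat.of_nat]
    rw [ge_iff_le]
    have hν' : (s : ℤ) + (padicValNat 2 (n !) : ℤ) ≤ ((n/2 : ℕ) : ℤ)
        + (padicValNat 2 (∑ i ∈ Finset.range (n+1), n.choose (2*i+1) * (2*i)^s) : ℤ) := by
      exact_mod_cast hν
    omega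
end

section
/- For integers $e \ge 1$ and $0 < d < 2^e$, the rational numbers $\frac{2^{2^e+d-1-\alpha(d)}}{d!\,(2^e)!}$ and $\frac{2^{2^e+d-1-\alpha(d)}}{(2^e+d)!}$ are 2-adic integers that are congruent modulo $2^{e - \lfloor \log_2 d\rfloor}$ (i.e., their difference has 2-adic valuation at least $e - \lfloor \log_2 d \rfloor$). -/
/-- `α n` is the number of 1's in the binary expansion of `n`. -/
def binAlpha (n : ℕ) : ℕ := (Nat.digits 2 n).sum

open Nat

lemma binAlpha_two_pow (e : ℕ) : binAlpha (2 ^ e) = 1 := by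
  induction e with
  | zero => simp [binAlpha]
  | succ n ih =>
    have h2 : (0:ℕ) < 2 ^ (n+1) := pow_pos (by norm_num) _
    rw [binAlpha, Nat.digits_def' (by norm_num : (1:ℕ) < 2) h2]
    have h3 : 2 ^ (n+1) % 2 = 0 := by simp [pow_succ, Nat.mul_mod_left]
    have h4 : 2 ^ (n+1) / 2 = 2 ^ n := by
      rw [pow_succ]; exact Nat.mul_div_cancel _ (by norm_num)
    rw [h3, h4, List.sum_cons, Nat.zero_add]
    exact ih

lemma val_factorial (n : ℕ) : padicValNat 2 (n !) = n - binAlpha n := by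
  have h := sub_one_mul_padicValNat_factorial (p := 2) n
  simpa [binAlpha] using h

lemma choose_ge_two (e d : ℕ) (hd : 0 < d) :
    2 ≤ Nat.choose (2 ^ e + d) d := by
  obtain ⟨k, rfl⟩ := Nat.exists_eq_succ_of_ne_zero hd.ne'
  have hrec : (2 ^ e + k + 1) * Nat.choose (2 ^ e + k) k
      = Nat.choose (2 ^ e + k + 1) (k + 1) * (k + 1) := by
    simpa [Nat.succ_eq_add_one] using Nat.add_one_mul_choose_eq (2 ^ e + k) k
  have hC'pos : 0 < Nat.choose (2 ^ e + k) k := Nat.choose_pos (Nat.le_add_left _ _)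
  have h2e : 1 ≤ 2 ^ e := Nat.one_le_two_pow
  have h1 : (2 ^ e + k + 1) * 1 ≤ (2 ^ e + k + 1) * Nat.choose (2 ^ e + k) k :=
    Nat.mul_le_mul_left _ hC'pos
  rw [hrec] at h1
  show 2 ≤ Nat.choose (2 ^ e + k + 1) (k + 1)
  by_contra h
  push_neg at h
  have h2 : Nat.choose (2 ^ e + k + 1) (k + 1) * (k + 1) ≤ 1 * (k + 1) :=
    Nat.mul_le_mul_right _ (by omega)
  omega

lemma key_s15 (e : ℕ) : ∀ d : ℕ, 0 < d → d < 2 ^ e →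
    2 ^ (e - Nat.log 2 d) ∣ (Nat.choose (2 ^ e + d) d - 1) := by
  intro d
  induction d with
  | zero => intro h; omega
  | succ k ih =>
    intro _ hlt
    rcases Nat.eq_zero_or_pos k with hk | hk
    · subst hk
      simp [Nat.choose_one_right]
    · have hklt : k < 2 ^ e := by omega
      have ihk := ih hk hklt
      set C' := Nat.choose (2 ^ e + k) k with hC'
      set C := Nat.choose (2 ^ e + k + 1) (k + 1) with hC
      have hrec : (2 ^ e + k + 1) * C' = C * (k + 1) := by
        simpa [Nat.succ_eq_add_one] using Nat.add_one_mul_choose_eq (2 ^ e + k) k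
      have hC'pos : 0 < C' := Nat.choose_pos (Nat.le_add_left _ _)
      have hC2 : 2 ≤ C := by
        have := choose_ge_two e (k + 1) (Nat.succ_pos k)
        simpa [← Nat.add_assoc] using this
      set t := Nat.log 2 (k + 1) with ht
      have hν : padicValNat 2 (k + 1) ≤ t :=
        Nat.le_log_of_pow_le (by norm_num)
          (Nat.le_of_dvd (by omega) pow_padicValNat_dvd)
      have htlt : t < e := Nat.log_lt_of_lt_pow (by omega) hlt
      have hlogmono : Nat.log 2 k ≤ t := Nat.log_mono_right (by omega)
      have h1 : 2 ^ (padicValNat 2 (k + 1) + (e - t)) ∣ (k + 1) * (C' - 1) := by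
        rw [pow_add]
        exact mul_dvd_mul pow_padicValNat_dvd ((pow_dvd_pow 2 (by omega)).trans ihk)
      have h2 : 2 ^ (padicValNat 2 (k + 1) + (e - t)) ∣ 2 ^ e * C' :=
        dvd_mul_of_dvd_left (pow_dvd_pow 2 (by omega)) _
      have hid : (k + 1) * (C - 1) = (k + 1) * (C' - 1) + 2 ^ e * C' := by
        have hrecZ : ((2 : ℤ) ^ e + k + 1) * (C' : ℤ) = (C : ℤ) * (k + 1) := by
          exact_mod_cast hrec
        zify [(by omega : 1 ≤ C'), (by omega : 1 ≤ C)]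
        linear_combination -hrecZ
      have hdvd : 2 ^ (padicValNat 2 (k + 1) + (e - t)) ∣ (k + 1) * (C - 1) := by
        rw [hid]; exact dvd_add h1 h2
      have hne : (k + 1) * (C - 1) ≠ 0 := Nat.mul_ne_zero (by omega) (by omega)
      have hle := (padicValNat_dvd_iff_le hne).mp hdvd
      rw [padicValNat.mul (by omega : k + 1 ≠ 0) (by omega : C - 1 ≠ 0)] at hle
      exact (padicValNat_dvd_iff_le (by omega : C - 1 ≠ 0)).mpr (by omega)

theorem factorial_frac_congr (e d : ℕ) (he : 1 ≤ e) (hd : 0 < d) (hd2 : d < 2 ^ e) :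
    0 ≤ padicValRat 2
        ((2 : ℚ) ^ (2 ^ e + d - 1 - binAlpha d)
          / ((Nat.factorial d : ℚ) * (Nat.factorial (2 ^ e) : ℚ))) ∧
    0 ≤ padicValRat 2
        ((2 : ℚ) ^ (2 ^ e + d - 1 - binAlpha d) / (Nat.factorial (2 ^ e + d) : ℚ)) ∧
    ((2 : ℚ) ^ (2 ^ e + d - 1 - binAlpha d)
          / ((Nat.factorial d : ℚ) * (Nat.factorial (2 ^ e) : ℚ))
        - (2 : ℚ) ^ (2 ^ e + d - 1 - binAlpha d) / (Nat.factorial (2 ^ e + d) : ℚ) = 0 ∨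
      padicValRat 2
          ((2 : ℚ) ^ (2 ^ e + d - 1 - binAlpha d)
              / ((Nat.factorial d : ℚ) * (Nat.factorial (2 ^ e) : ℚ))
            - (2 : ℚ) ^ (2 ^ e + d - 1 - binAlpha d) / (Nat.factorial (2 ^ e + d) : ℚ))
        ≥ (e : ℤ) - Nat.log 2 d) := by
  have h2e : 1 ≤ 2 ^ e := Nat.one_le_two_pow
  have hα : binAlpha d ≤ d := Nat.digit_sum_le 2 d
  set N := 2 ^ e + d - 1 - binAlpha d with hN
  set C := Nat.choose (2 ^ e + d) d with hCdef
  have hC2 : 2 ≤ C := choose_ge_two e d hd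
  have hkey := key_s15 e d hd hd2
  have hlog : Nat.log 2 d < e := Nat.log_lt_of_lt_pow hd.ne' hd2
  have hCodd : padicValNat 2 C = 0 := by
    apply padicValNat.eq_zero_of_not_dvd
    intro hdvd
    have h2 : 2 ∣ C - 1 :=
      dvd_trans (dvd_pow_self 2 (by omega : e - Nat.log 2 d ≠ 0)) hkey
    omega
  have hvd : padicValNat 2 (d !) = d - binAlpha d := val_factorial d
  have hve : padicValNat 2 ((2 ^ e)!) = 2 ^ e - 1 := by
    rw [val_factorial, binAlpha_two_pow]
  have hfid : C * (2 ^ e)! * d ! = (2 ^ e + d)! :=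
    Nat.add_choose_mul_factorial_mul_factorial (2 ^ e) d
  have hvf : padicValNat 2 ((2 ^ e + d)!) = (2 ^ e - 1) + (d - binAlpha d) := by
    rw [← hfid,
      padicValNat.mul (Nat.mul_ne_zero (by omega) (Nat.factorial_ne_zero _))
        (Nat.factorial_ne_zero _),
      padicValNat.mul (by omega) (Nat.factorial_ne_zero _), hCodd, hve, hvd]
    omega
  have hpow_ne : ((2 : ℚ) ^ N) ≠ 0 := by positivity
  have hdfne : ((Nat.factorial d : ℚ)) ≠ 0 := Nat.cast_ne_zero.mpr (Nat.factorial_ne_zero _)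
  have hefne : ((Nat.factorial (2 ^ e) : ℚ)) ≠ 0 := Nat.cast_ne_zero.mpr (Nat.factorial_ne_zero _)
  have hFne : ((Nat.factorial (2 ^ e + d) : ℚ)) ≠ 0 := Nat.cast_ne_zero.mpr (Nat.factorial_ne_zero _)
  have hMne : ((Nat.factorial d : ℚ) * (Nat.factorial (2 ^ e) : ℚ)) ≠ 0 := mul_ne_zero hdfne hefne
  have hvalpow : padicValRat 2 ((2 : ℚ) ^ N) = N := by
    rw [show ((2 : ℚ) ^ N) = ((2 ^ N : ℕ) : ℚ) by push_cast; ring, padicValRat.of_nat,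
      padicValNat.prime_pow]
  have hA : padicValRat 2 ((2 : ℚ) ^ N / ((Nat.factorial d : ℚ) * (Nat.factorial (2 ^ e) : ℚ))) = 0 := by
    rw [padicValRat.div hpow_ne hMne, hvalpow,
      show ((Nat.factorial d : ℚ) * (Nat.factorial (2 ^ e) : ℚ)) = ((d ! * (2 ^ e)! : ℕ) : ℚ) by
        push_cast; ring,
      padicValRat.of_nat, padicValNat.mul (Nat.factorial_ne_zero _) (Nat.factorial_ne_zero _),
      hvd, hve]
    omega
  have hB : padicValRat 2 ((2 : ℚ) ^ N / (Nat.factorial (2 ^ e + d) : ℚ)) = 0 := by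
    rw [padicValRat.div hpow_ne hFne, hvalpow, padicValRat.of_nat, hvf]
    omega
  refine ⟨by rw [hA], by rw [hB], Or.inr ?_⟩
  have hfidQ : (C : ℚ) * (Nat.factorial (2 ^ e) : ℚ) * (Nat.factorial d : ℚ)
      = (Nat.factorial (2 ^ e + d) : ℚ) := by exact_mod_cast congrArg (Nat.cast (R := ℚ)) hfid
  have hABeq : (2 : ℚ) ^ N / ((Nat.factorial d : ℚ) * (Nat.factorial (2 ^ e) : ℚ))
        - (2 : ℚ) ^ N / (Nat.factorial (2 ^ e + d) : ℚ)
      = ((2 : ℚ) ^ N / (Nat.factorial (2 ^ e + d) : ℚ)) * ((C : ℚ) - 1) := by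
    field_simp
    rw [← hfidQ]; ring
  have hCm1ne : ((C : ℚ) - 1) ≠ 0 := by
    have h2 : (2 : ℚ) ≤ (C : ℚ) := by exact_mod_cast hC2
    intro h; linarith [sub_eq_zero.mp h]
  have hBne : (2 : ℚ) ^ N / (Nat.factorial (2 ^ e + d) : ℚ) ≠ 0 := div_ne_zero hpow_ne hFne
  rw [hABeq, padicValRat.mul hBne hCm1ne, hB, zero_add,
    show ((C : ℚ) - 1) = ((C - 1 : ℕ) : ℚ) by push_cast [Nat.cast_sub (by omega : 1 ≤ C)]; ring,
    padicValRat.of_nat]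
  have hval := (padicValNat_dvd_iff_le (by omega : C - 1 ≠ 0)).mp hkey
  omega
end

section
/- If $0 < r \le D$ and $e \ge 1$, then the 2-adic valuation of $\frac{2^{2^e - r - 1}}{(2^e - r)!}$ is at least $e - 1 - \lfloor \log_2 D \rfloor$ (assuming $r \le 2^e$). -/
open Nat Finset

lemma two_pow_digit_sum_le (n : ℕ) : 2 ^ (Nat.digits 2 n).sum ≤ n + 1 := by
  induction n using Nat.strong_induction_on with
  | _ n ih =>
    rcases Nat.eq_zero_or_pos n with h | h
    · simp [h]
    · rw [Nat.digits_def' (by norm_num : 1 < 2) h]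
      simp only [List.sum_cons]
      have ih2 := ih (n / 2) (Nat.div_lt_self h one_lt_two)
      have hdm := Nat.div_add_mod n 2
      have h2 : n % 2 = 0 ∨ n % 2 = 1 := by omega
      rw [pow_add]
      rcases h2 with h2 | h2 <;> rw [h2] <;> simp <;> omega

lemma aux_div (i e r : ℕ) (hi1 : 1 ≤ i) (hie : i ≤ e) (hr : 1 ≤ r) (hre : r ≤ 2 ^ e) :
    (2 ^ e - r) / 2 ^ i + (r - 1) / 2 ^ i + 1 = 2 ^ (e - i) := by
  set P := 2 ^ i with hP
  set Q := 2 ^ (e - i) with hQ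
  have hPQ : P * Q = 2 ^ e := by
    rw [hP, hQ, ← pow_add]
    congr 1
    omega
  have hP1 : 0 < P := Nat.pow_pos (by norm_num)
  set a := (r - 1) / P with ha
  set b := (r - 1) % P with hb
  have hab : P * a + b = r - 1 := Nat.div_add_mod _ _
  have hbP : b < P := Nat.mod_lt _ hP1
  have haQ : a < Q := by
    rw [ha, Nat.div_lt_iff_lt_mul hP1, mul_comm Q P]
    omega
  have hmul : a * P + P ≤ Q * P := by
    have h := Nat.mul_le_mul_right P haQ
    rwa [Nat.succ_mul] at h
  have hdecomp : 2 ^ e - r = P * (Q - 1 - a) + (P - 1 - b) := by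
    have h1 : P * (Q - 1 - a) = P * Q - P * 1 - P * a := by
      rw [Nat.mul_sub, Nat.mul_sub]
    rw [h1]
    have h2 : P * a + P ≤ P * Q := by
      rw [mul_comm P a, mul_comm P Q]; exact hmul
    omega
  have hdiv : (2 ^ e - r) / P = Q - 1 - a := by
    rw [hdecomp, Nat.mul_add_div hP1, Nat.div_eq_of_lt (by omega), add_zero]
  rw [hdiv]
  omega

lemma sum_two_pow (e : ℕ) : ∑ i ∈ Finset.range e, 2 ^ i = 2 ^ e - 1 := by
  induction e with
  | zero => simp
  | succ n ihn =>
    rw [Finset.sum_range_succ, ihn]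
    have : 0 < 2 ^ n := Nat.pow_pos (by norm_num)
    rw [pow_succ]
    omega

lemma factorial_val_sum (e r : ℕ) (hr : 1 ≤ r) (he : 1 ≤ e) (hre : r ≤ 2 ^ e) :
    padicValNat 2 (Nat.factorial (2 ^ e - r)) + padicValNat 2 (Nat.factorial (r - 1)) + e + 1
      = 2 ^ e := by
  have hb1 : Nat.log 2 (2 ^ e - r) < e + 1 := by
    calc Nat.log 2 (2 ^ e - r) ≤ Nat.log 2 (2 ^ e) := Nat.log_mono_right (by omega)
    _ = e := Nat.log_pow (by norm_num : 1 < 2) e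
    _ < e + 1 := Nat.lt_succ_self e
  have hb2 : Nat.log 2 (r - 1) < e + 1 := by
    calc Nat.log 2 (r - 1) ≤ Nat.log 2 (2 ^ e) := Nat.log_mono_right (by omega)
    _ = e := Nat.log_pow (by norm_num : 1 < 2) e
    _ < e + 1 := Nat.lt_succ_self e
  rw [padicValNat_factorial hb1, padicValNat_factorial hb2, ← Finset.sum_add_distrib]
  have hpt : ∀ i ∈ Finset.Ico 1 (e + 1),
      (2 ^ e - r) / 2 ^ i + (r - 1) / 2 ^ i = 2 ^ (e - i) - 1 := by
    intro i hi
    rw [Finset.mem_Ico] at hi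
    have h := aux_div i e r hi.1 (by omega) hr hre
    rw [← h, Nat.add_sub_cancel]
  rw [Finset.sum_congr rfl hpt]
  have hsum : ∑ i ∈ Finset.Ico 1 (e + 1), (2 ^ (e - i) - 1)
      = (∑ i ∈ Finset.Ico 1 (e + 1), 2 ^ (e - i)) - e := by
    rw [Finset.sum_tsub_distrib]
    · simp
    · intro i hi
      exact Nat.one_le_two_pow
  rw [hsum]
  have hsum2 : ∑ i ∈ Finset.Ico 1 (e + 1), 2 ^ (e - i) = 2 ^ e - 1 := by
    rw [Finset.sum_Ico_eq_sum_range]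
    simp only [Nat.add_sub_cancel]
    have : ∀ i ∈ Finset.range e, 2 ^ (e - (1 + i)) = 2 ^ (e - 1 - i) := by
      intro i hi; congr 1; omega
    rw [Finset.sum_congr rfl this,
      Finset.sum_range_reflect (fun j => 2 ^ j) e]
    exact sum_two_pow e
  rw [hsum2]
  have : e ≤ 2 ^ e - 1 := by
    have : e < 2 ^ e := Nat.lt_two_pow_self
    omega
  omega

theorem val_pow_div_factorial (e r D : ℕ) (hr : 0 < r) (hrD : r ≤ D) (he : 1 ≤ e)
    (hre : r ≤ 2 ^ e) :
    padicValRat 2 ((2 : ℚ) ^ ((2 ^ e : ℤ) - r - 1) / (Nat.factorial (2 ^ e - r) : ℚ))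
      ≥ (e : ℤ) - 1 - Nat.log 2 D := by
  set t := Nat.log 2 D with ht
  set m := 2 ^ e - r with hm
  -- rewrite the power
  have key : (2 : ℚ) ^ ((2 ^ e : ℤ) - r - 1)
      = ((2 ^ (2 ^ e) : ℕ) : ℚ) / ((2 ^ (r + 1) : ℕ) : ℚ) := by
    rw [show ((2 ^ e : ℤ) - r - 1) = ((2 ^ e : ℕ) : ℤ) - ((r + 1 : ℕ) : ℤ) by
        push_cast; ring,
      zpow_sub₀ (two_ne_zero), zpow_natCast, zpow_natCast]
    push_cast
    ring
  rw [key, div_div, ← Nat.cast_mul]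
  have hfac : (Nat.factorial m) ≠ 0 := Nat.factorial_ne_zero m
  have hnum : ((2 ^ (2 ^ e) : ℕ) : ℚ) ≠ 0 := by positivity
  have hden : (((2 ^ (r + 1) * Nat.factorial m : ℕ)) : ℚ) ≠ 0 := by
    simp [Nat.factorial_ne_zero, pow_ne_zero]
  rw [padicValRat.div hnum hden, padicValRat.of_nat, padicValRat.of_nat,
    padicValNat.prime_pow,
    padicValNat.mul (by positivity) hfac, padicValNat.prime_pow]
  -- digit sum bound for r - 1
  have hsd : (Nat.digits 2 (r - 1)).sum ≤ t := by
    by_contra hcon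
    push_neg at hcon
    have h1 : 2 ^ (t + 1) ≤ 2 ^ (Nat.digits 2 (r - 1)).sum :=
      Nat.pow_le_pow_right (by norm_num) hcon
    have h2 := two_pow_digit_sum_le (r - 1)
    have h3 : D < 2 ^ (t + 1) := Nat.lt_pow_succ_log_self (by norm_num) D
    omega
  have hval : padicValNat 2 (Nat.factorial (r - 1))
      = (r - 1) - (Nat.digits 2 (r - 1)).sum := by
    have := sub_one_mul_padicValNat_factorial (p := 2) (r - 1)
    simpa using this
  have hsle : (Nat.digits 2 (r - 1)).sum ≤ r - 1 := Nat.digit_sum_le 2 (r - 1)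
  have hid := factorial_val_sum e r hr he hre
  rw [← hm, hval] at hid
  obtain ⟨E, hE⟩ : ∃ E, (2 : ℕ) ^ e = E := ⟨_, rfl⟩
  rw [hE] at hid ⊢
  omega
end

section
/- Suppose $f : \mathbb{Z} \to \mathbb{Z} \cup \{\infty\}$ satisfies $f(0) \ge 0$ and, for all integers $x$ and all $d \ge 0$, $f(x+2^d) = \min'(f(x), d)$, where $\min'(a,b) = \min(a,b)$ if $a \ne b$ and $\min'(a,a) > a$ (i.e., $f(x+2^d) = \min(f(x),d)$ when $f(x) \ne d$, and $f(x+2^d) > d$ when $f(x) = d$). Then there exists a 2-adic integer $z_0$ such that $f(x) = \nu(x - z_0)$ for all integers $x$. -/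
-- The 2-adic valuation on `ℤ_[2]`, with `ν 0 = ∞`.
open Classical in
noncomputable def nu2 (z : ℤ_[2]) : WithTop ℤ :=
  if z = 0 then ⊤ else (z.valuation : WithTop ℤ)


section aux

variable (f : ℤ → WithTop ℤ)
variable (hne : ∀ (x : ℤ) (d : ℕ), f x ≠ (d : ℤ) → f (x + 2 ^ d) = min (f x) (d : ℤ))
variable (heq : ∀ (x : ℤ) (d : ℕ), f x = (d : ℤ) → (d : WithTop ℤ) < f (x + 2 ^ d))

include hne in
lemma aux_lt {x : ℤ} {d : ℕ} (h : f x < ((d : ℤ) : WithTop ℤ)) : f (x + 2 ^ d) = f x := by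
  rw [hne x d (ne_of_lt h), min_eq_left h.le]

include hne in
lemma aux_gt {x : ℤ} {d : ℕ} (h : ((d : ℤ) : WithTop ℤ) < f x) :
    f (x + 2 ^ d) = ((d : ℤ) : WithTop ℤ) := by
  rw [hne x d (ne_of_gt h), min_eq_right h.le]

include hne heq in
lemma aux_ge_iff {x : ℤ} {n : ℕ} :
    ((n : ℤ) : WithTop ℤ) ≤ f x ↔ ((n : ℤ) : WithTop ℤ) ≤ f (x + 2 ^ n) := by
  constructor
  · intro h
    rcases eq_or_lt_of_le h with h' | h'
    · have := heq x n h'.symm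
      rw [WithTop.coe_natCast] at *
      exact this.le
    · rw [aux_gt f hne h']
  · intro h
    by_contra hc
    push_neg at hc
    rw [aux_lt f hne hc] at h
    exact absurd h (not_le.mpr hc)

include hne heq in
lemma aux_ge_mul {x : ℤ} {n : ℕ} (m : ℤ) :
    ((n : ℤ) : WithTop ℤ) ≤ f x ↔ ((n : ℤ) : WithTop ℤ) ≤ f (x + 2 ^ n * m) := by
  induction m using Int.induction_on with
  | zero => simp
  | succ i ih =>
    have h2 := aux_ge_iff f hne heq (x := x + 2 ^ n * (i : ℤ)) (n := n)
    have : x + 2 ^ n * ((i : ℤ) + 1) = x + 2 ^ n * (i : ℤ) + 2 ^ n := by ring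
    rw [this]
    exact ih.trans h2
  | pred i ih =>
    have h2 := aux_ge_iff f hne heq (x := x + 2 ^ n * (-(i : ℤ) - 1)) (n := n)
    have : x + 2 ^ n * (-(i : ℤ) - 1) + 2 ^ n = x + 2 ^ n * (-(i : ℤ)) := by ring
    rw [this] at h2
    exact ih.trans h2.symm

include hne heq in
set_option linter.unusedSectionVars false in
lemma aux_val : ∀ n : ℕ, ∀ y r : ℤ, ((n : ℤ) : WithTop ℤ) ≤ f y → 0 < r → r < 2 ^ n →
    ∀ k : ℕ, (2 : ℤ) ^ k ∣ r → ¬ (2 : ℤ) ^ (k + 1) ∣ r →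
    f (y + r) = ((k : ℤ) : WithTop ℤ) := by
  intro n
  induction n with
  | zero => intro y r _ h1 h2; omega
  | succ n ih =>
    intro y r hy h1 h2 k hk hk'
    have hyn : ((n : ℤ) : WithTop ℤ) ≤ f y := by
      refine le_trans ?_ hy
      exact_mod_cast WithTop.coe_le_coe.mpr (by exact_mod_cast Nat.cast_le.mpr (Nat.le_succ n))
    by_cases hr : r < 2 ^ n
    · exact ih y r hyn h1 hr k hk hk'
    · push_neg at hr
      have hklen : k ≤ n := by
        by_contra hc
        push_neg at hc
        have : (2 : ℤ) ^ (n + 1) ∣ r := dvd_trans (pow_dvd_pow 2 hc) hk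
        have := Int.le_of_dvd h1 this
        omega
      have hfy2 : f (y + 2 ^ n) = ((n : ℤ) : WithTop ℤ) := by
        apply aux_gt f hne
        refine lt_of_lt_of_le ?_ hy
        exact_mod_cast WithTop.coe_lt_coe.mpr (by exact_mod_cast Nat.cast_lt.mpr (Nat.lt_succ_self n))
      set r' := r - 2 ^ n with hr'
      have hr'nn : 0 ≤ r' := by omega
      have hr'lt : r' < 2 ^ n := by
        have : (2:ℤ) ^ (n+1) = 2 * 2 ^ n := by ring
        omega
      rcases eq_or_lt_of_le hr'nn with h0' | h0'
      · -- r = 2^n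
        have hreq : r = 2 ^ n := by omega
        have hkn : k = n := by
          rcases eq_or_lt_of_le hklen with h | h
          · exact h
          · exfalso
            exact hk' (by rw [hreq]; exact pow_dvd_pow 2 (by omega))
        rw [hreq, hfy2, hkn]
      · -- r' > 0
        have hkltn : k < n := by
          rcases eq_or_lt_of_le hklen with h | h
          · exfalso
            subst h
            have : (2:ℤ) ^ k ∣ r' := dvd_sub hk dvd_rfl
            have := Int.le_of_dvd h0' this
            omega
          · exact h
        have hdk : (2:ℤ) ^ k ∣ r' := dvd_sub hk (pow_dvd_pow 2 (by omega))
        have hdk' : ¬ (2:ℤ) ^ (k+1) ∣ r' := by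
          intro hc
          exact hk' (by
            have : r = r' + 2 ^ n := by omega
            rw [this]
            exact dvd_add hc (pow_dvd_pow 2 (by omega)))
        have := ih (y + 2 ^ n) r' (le_of_eq hfy2.symm) h0' hr'lt k hdk hdk'
        rwa [show y + 2 ^ n + r' = y + r by omega] at this

end aux



lemma wt_succ_le {n : ℕ} {t : WithTop ℤ} (h : ((n : ℤ) : WithTop ℤ) < t) :
    (((n + 1 : ℕ) : ℤ) : WithTop ℤ) ≤ t := by
  induction t using WithTop.recTopCoe with
  | top => exact le_top
  | coe c =>
    exact_mod_cast WithTop.coe_le_coe.mpr (by exact_mod_cast Int.add_one_le_iff.mpr (WithTop.coe_lt_coe.mp h))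

theorem exists_zero_of_minprime (f : ℤ → WithTop ℤ)
    (h0 : 0 ≤ f 0)
    (hne : ∀ (x : ℤ) (d : ℕ), f x ≠ (d : ℤ) → f (x + 2 ^ d) = min (f x) (d : ℤ))
    (heq : ∀ (x : ℤ) (d : ℕ), f x = (d : ℤ) → (d : WithTop ℤ) < f (x + 2 ^ d)) :
    ∃ z₀ : ℤ_[2], ∀ x : ℤ, f x = nu2 ((x : ℤ_[2]) - z₀) := by
  classical
  set a : ℕ → ℤ := fun n => Nat.rec 0 (fun n an => if f an = ((n:ℤ) : WithTop ℤ) then an + 2 ^ n else an) n with ha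
  have haS : ∀ n, a (n+1) = if f (a n) = ((n:ℤ) : WithTop ℤ) then a n + 2 ^ n else a n := fun n => rfl
  have hfa : ∀ n : ℕ, ((n : ℤ) : WithTop ℤ) ≤ f (a n) := by
    intro n
    induction n with
    | zero => simpa [show a 0 = 0 from rfl] using h0
    | succ n ih =>
      rw [haS]
      by_cases hc : f (a n) = ((n:ℤ) : WithTop ℤ)
      · rw [if_pos hc]
        have h2 := heq (a n) n hc
        rw [← WithTop.coe_natCast (α := ℤ)] at h2
        exact wt_succ_le h2
      · rw [if_neg hc]
        exact wt_succ_le (lt_of_le_of_ne ih (Ne.symm hc))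
  -- the 2-adic sequence
  set g : ℕ → ℤ_[2] := fun n => ((a n : ℤ) : ℤ_[2]) with hg
  have hstep : ∀ n, ‖g (n+1) - g n‖ ≤ (2:ℝ) ^ (-(n:ℤ)) := by
    intro n
    rw [hg]
    simp only
    rw [haS]
    split
    · push_cast
      rw [show ((a n : ℤ_[2]) + 2 ^ n - a n) = (2:ℤ_[2]) ^ n by ring]
      rw [show ((2:ℤ_[2]) ^ n) = ((2:ℕ) : ℤ_[2]) ^ n by norm_num]
      rw [PadicInt.norm_p_pow]
      norm_num
    · simp
  have hbound : ∀ n m : ℕ, ‖g (n + m) - g n‖ ≤ (2:ℝ) ^ (-(n:ℤ)) := by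
    intro n m
    induction m with
    | zero => simp
    | succ m ih =>
      have h1 := hstep (n + m)
      have : g (n + (m+1)) - g n = (g (n + m + 1) - g (n + m)) + (g (n + m) - g n) := by
        rw [show n + (m+1) = n + m + 1 by ring]; ring
      rw [this]
      refine le_trans (PadicInt.nonarchimedean _ _) (max_le (le_trans h1 ?_) ih)
      apply zpow_le_zpow_right₀ (by norm_num)
      omega
  have hcauchy : CauchySeq g := by
    apply cauchySeq_of_le_tendsto_0 (s := g) (fun N => (2:ℝ) ^ (-(N:ℤ)))
    · intro n m N hn hm
      rcases le_total n m with h | h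
      · obtain ⟨c, rfl⟩ := Nat.exists_eq_add_of_le h
        rw [dist_comm, dist_eq_norm]
        exact le_trans (hbound n c) (zpow_le_zpow_right₀ (by norm_num) (by omega))
      · obtain ⟨c, rfl⟩ := Nat.exists_eq_add_of_le h
        rw [dist_eq_norm]
        exact le_trans (hbound m c) (zpow_le_zpow_right₀ (by norm_num) (by omega))
    · have : (fun N : ℕ => (2:ℝ) ^ (-(N:ℤ))) = fun N : ℕ => ((2:ℝ)⁻¹) ^ N := by
        funext N
        rw [inv_pow, ← zpow_natCast, ← zpow_neg]
      rw [this]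
      exact tendsto_pow_atTop_nhds_zero_of_lt_one (by norm_num) (by norm_num)
  obtain ⟨z₀, hz⟩ := cauchySeq_tendsto_of_complete hcauchy
  have hlim : ∀ n, ‖g n - z₀‖ ≤ (2:ℝ) ^ (-(n:ℤ)) := by
    intro n
    rw [← dist_eq_norm]
    refine le_of_tendsto (Filter.Tendsto.dist tendsto_const_nhds hz) ?_
    filter_upwards [Filter.eventually_ge_atTop n] with m hm
    obtain ⟨c, rfl⟩ := Nat.exists_eq_add_of_le hm
    rw [dist_comm, dist_eq_norm]
    exact hbound n c

  -- final argument
  refine ⟨z₀, fun x => ?_⟩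
  set w : ℤ_[2] := ((x : ℤ) : ℤ_[2]) - z₀ with hw
  by_cases hw0 : w = 0
  · simp only [nu2]
    rw [if_pos hw0]
    have hge : ∀ n : ℕ, ((n:ℤ) : WithTop ℤ) ≤ f x := by
      intro n
      have h1 : ‖((x - a n : ℤ) : ℤ_[2])‖ ≤ (2:ℝ) ^ (-(n:ℤ)) := by
        have heq2 : ((x - a n : ℤ) : ℤ_[2]) = -(g n - z₀) := by
          have hx0 : ((x : ℤ) : ℤ_[2]) = z₀ := by
            have := sub_eq_zero.mp hw0
            exact this
          rw [hg]
          push_cast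
          rw [hx0]
          ring
        rw [heq2, norm_neg]
        exact hlim n
      have h2 : ((2:ℤ)^n) ∣ (x - a n) := by
        have h := PadicInt.norm_int_le_pow_iff_dvd (p := 2) (k := x - a n) (n := n)
        have h2' : ‖((x - a n : ℤ) : ℤ_[2])‖ ≤ ((2:ℕ):ℝ)^(-(n:ℤ)) := by
          refine le_trans h1 ?_
          norm_num
        exact_mod_cast h.mp (by exact_mod_cast h2')
      obtain ⟨m, hm⟩ := h2
      have h3 := (aux_ge_mul f hne heq (x := a n) (n := n) m).mp (hfa n)
      rwa [show a n + 2^n * m = x by linarith] at h3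
    by_contra htop
    obtain ⟨c, hc⟩ := WithTop.ne_top_iff_exists.mp htop
    have h4 := hge (c.toNat + 1)
    rw [← hc] at h4
    have h5 := WithTop.coe_le_coe.mp h4
    omega
  · simp only [nu2]
    rw [if_neg hw0]
    have hk'nn : 0 ≤ w.valuation := Nat.zero_le _
    set k : ℕ := w.valuation with hk
    have hkk' : (k : ℤ) = w.valuation := rfl
    have hnormw : ‖w‖ = (2:ℝ) ^ (-(k:ℤ)) := by
      rw [PadicInt.norm_eq_zpow_neg_valuation hw0, ← hkk']
      norm_num
    set n : ℕ := k + 1 with hn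
    have hxan : ‖((x - a n : ℤ) : ℤ_[2])‖ = (2:ℝ)^(-(k:ℤ)) := by
      have h3 : ‖z₀ - g n‖ < ‖w‖ := by
        rw [norm_sub_rev, hnormw]
        refine lt_of_le_of_lt (hlim n) ?_
        apply zpow_lt_zpow_right₀ (by norm_num)
        omega
      have heq2 : ((x - a n : ℤ) : ℤ_[2]) = w + (z₀ - g n) := by
        rw [hw, hg]
        push_cast
        ring
      rw [heq2, PadicInt.norm_add_eq_max_of_ne h3.ne', max_eq_left h3.le, hnormw]
    have hdvd : (2:ℤ)^k ∣ (x - a n) := by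
      have h := PadicInt.norm_int_le_pow_iff_dvd (p := 2) (k := x - a n) (n := k)
      have h2' : ‖((x - a n : ℤ) : ℤ_[2])‖ ≤ ((2:ℕ):ℝ)^(-(k:ℤ)) := by
        rw [hxan]; norm_num
      exact_mod_cast h.mp (by exact_mod_cast h2')
    have hndvd : ¬ (2:ℤ)^(k+1) ∣ (x - a n) := by
      intro hc
      have h := PadicInt.norm_int_le_pow_iff_dvd (p := 2) (k := x - a n) (n := k+1)
      have h2 := h.mpr (by exact_mod_cast hc)
      rw [hxan] at h2
      have h3 : ((2:ℕ):ℝ)^(-((k+1:ℕ)):ℤ) < (2:ℝ)^(-(k:ℤ)) := by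
        have : ((2:ℕ):ℝ) = (2:ℝ) := by norm_num
        rw [this]
        apply zpow_lt_zpow_right₀ (by norm_num)
        omega
      exact absurd (lt_of_le_of_lt h2 h3) (lt_irrefl _)
    have h2npos : (0:ℤ) < 2^n := by positivity
    set q : ℤ := (x - a n) / 2^n with hq
    set r : ℤ := (x - a n) % 2^n with hr
    have hqr : 2^n * q + r = x - a n := Int.mul_ediv_add_emod _ _
    have hrnn : 0 ≤ r := Int.emod_nonneg _ (by positivity)
    have hrlt : r < 2^n := Int.emod_lt_of_pos _ h2npos
    have hrne : r ≠ 0 := by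
      intro h0r
      apply hndvd
      rw [← hn]
      exact ⟨q, by linarith⟩
    have hdr : (2:ℤ)^k ∣ r := by
      have h1 : (2:ℤ)^k ∣ 2^n * q := Dvd.dvd.mul_right (pow_dvd_pow 2 (by omega)) q
      have : r = (x - a n) - 2^n * q := by linarith
      rw [this]
      exact dvd_sub hdvd h1
    have hndr : ¬ (2:ℤ)^(k+1) ∣ r := by
      intro hc
      apply hndvd
      have h1 : (2:ℤ)^(k+1) ∣ 2^n * q := Dvd.dvd.mul_right (pow_dvd_pow 2 (by omega)) q
      have : x - a n = 2^n * q + r := by linarith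
      rw [this]
      exact dvd_add h1 hc
    have hy : ((n:ℤ) : WithTop ℤ) ≤ f (a n + 2^n * q) := (aux_ge_mul f hne heq q).mp (hfa n)
    have hval := aux_val f hne heq n (a n + 2^n*q) r hy (lt_of_le_of_ne hrnn (Ne.symm hrne)) hrlt k hdr hndr
    rw [show a n + 2^n*q + r = x by linarith] at hval
    rw [hval, hkk']
    exact WithTop.coe_natCast (α := ℤ) (n := k)
end

section
/- Suppose $g : \mathbb{Z} \to \mathbb{Q} \cup \{\infty\}$ and $c \in \mathbb{Z}$ satisfy $\nu(g(0)) \ge c$ and, for all integers $x$ and all $d \ge 0$, $\nu(g(x+2^d) - g(x)) = d + c$. Then there exists a 2-adic integer $z_0$ such that $\nu(g(x)) = \nu(x - z_0) + c$ for all integers $x$. -/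
open Classical in
noncomputable def nuQ2 (z : ℚ_[2]) : WithTop ℤ :=
  if z = 0 then ⊤ else (z.valuation : WithTop ℤ)

private lemma unit_sub_one (u : ℚ_[2]) (hu : ‖u‖ = 1) : ‖u - 1‖ ≤ (2:ℝ)^(-1 : ℤ) := by
  set U : ℤ_[2] := ⟨u, hu.le⟩ with hU
  have mem_iff : ∀ V : ℤ_[2], PadicInt.toZMod V = 0 ↔ ‖V‖ < 1 := by
    intro V
    rw [← RingHom.mem_ker, PadicInt.ker_toZMod, PadicInt.maximalIdeal_eq_span_p,
      Ideal.mem_span_singleton, ← PadicInt.norm_lt_one_iff_dvd]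
  have h1 : PadicInt.toZMod U ≠ 0 := by
    rw [Ne, mem_iff]
    rw [show ‖U‖ = ‖u‖ from rfl, hu]
    exact lt_irrefl _
  have h2 : PadicInt.toZMod (U - 1) = 0 := by
    have h : ∀ z : ZMod 2, z ≠ 0 → z = 1 := by decide
    rw [map_sub, map_one, h _ h1, sub_self]
  have h3 : ‖U - 1‖ < 1 := (mem_iff _).mp h2
  have h4 := (PadicInt.norm_lt_pow_iff_norm_le_pow_sub_one (U - 1) 0).mp (by simpa using h3)
  have h5 : ‖U - 1‖ = ‖u - 1‖ := by
    rw [show ‖U - 1‖ = ‖((U - 1 : ℤ_[2]) : ℚ_[2])‖ from rfl]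
    push_cast
    rfl
  rw [← h5]
  exact_mod_cast h4

private lemma keyA (a b : ℚ_[2]) (hab : ‖a‖ = ‖b‖) : ‖a - b‖ ≤ ‖a‖ / 2 := by
  rcases eq_or_ne b 0 with rfl | hb
  · have : a = 0 := by simpa using (norm_eq_zero.mp (by simpa using hab))
    simp [this]
  · have hbn : ‖b‖ ≠ 0 := by simpa using hb
    have hu : ‖a / b‖ = 1 := by rw [norm_div, hab, div_self hbn]
    have h1 := unit_sub_one (a / b) hu
    have h2 : a - b = b * (a / b - 1) := by field_simp
    rw [h2, norm_mul, hab]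
    calc ‖b‖ * ‖a/b - 1‖ ≤ ‖b‖ * (2:ℝ)^(-1:ℤ) := mul_le_mul_of_nonneg_left h1 (norm_nonneg b)
      _ = ‖b‖ / 2 := by rw [zpow_neg_one]; ring

private lemma nuQ2_le_iff (z : ℚ_[2]) (n : ℤ) :
    (n : WithTop ℤ) ≤ nuQ2 z ↔ ‖z‖ ≤ (2:ℝ)^(-n) := by
  rcases eq_or_ne z 0 with rfl | hz
  · simp [nuQ2]
    positivity
  · rw [nuQ2, if_neg hz, Padic.norm_eq_zpow_neg_valuation hz]
    rw [show ((2:ℕ):ℝ)^(-z.valuation) = (2:ℝ)^(-z.valuation) by norm_num]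
    rw [WithTop.coe_le_coe]
    constructor
    · intro h; exact zpow_le_zpow_right₀ one_le_two (neg_le_neg h)
    · intro h
      have := (zpow_le_zpow_iff_right₀ (one_lt_two (α := ℝ))).mp h
      omega

private lemma nuQ2_eq_iff (z : ℚ_[2]) (n : ℤ) :
    nuQ2 z = (n : WithTop ℤ) ↔ ‖z‖ = (2:ℝ)^(-n) := by
  rcases eq_or_ne z 0 with rfl | hz
  · simp only [nuQ2, if_pos rfl, norm_zero]
    constructor
    · intro h; exact absurd h.symm (WithTop.coe_ne_top)
    · intro h; exfalso; have : (0:ℝ) < 2^(-n) := by positivity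
      rw [← h] at this; exact lt_irrefl _ this
  · rw [nuQ2, if_neg hz, Padic.norm_eq_zpow_neg_valuation hz]
    rw [show ((2:ℕ):ℝ)^(-z.valuation) = (2:ℝ)^(-z.valuation) by norm_num]
    rw [WithTop.coe_inj]
    constructor
    · rintro rfl; rfl
    · intro h
      have := zpow_right_injective₀ (by norm_num : (0:ℝ) < 2) (by norm_num) h
      omega

private lemma padic_le_iff_lt (z : ℚ_[2]) (n : ℤ) : ‖z‖ ≤ (2:ℝ)^n ↔ ‖z‖ < (2:ℝ)^(n+1) := by
  exact_mod_cast Padic.norm_le_pow_iff_norm_lt_pow_add_one z n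

private lemma discrete2 (z : ℚ_[2]) (v : ℤ) (h1 : ‖z‖ ≤ (2:ℝ)^(-v))
    (h2 : ¬ ‖z‖ ≤ (2:ℝ)^(-(v+1))) : ‖z‖ = (2:ℝ)^(-v) := by
  rw [padic_le_iff_lt, show -(v+1)+1 = -v by ring] at h2
  push_neg at h2
  exact le_antisymm h1 h2

private lemma int_norm_le (k : ℤ) (n : ℕ) :
    ‖(k : ℚ_[2])‖ ≤ (2:ℝ)^(-(n:ℤ)) ↔ ((2:ℤ)^n : ℤ) ∣ k := by
  exact_mod_cast Padic.norm_int_le_pow_iff_dvd k n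

private lemma norm_all_small (w : ℚ_[2]) (h : ∀ n : ℕ, ‖w‖ ≤ (2:ℝ)^(-(n:ℤ))) : w = 0 := by
  by_contra hw
  have hv : ‖w‖ = (2:ℝ)^(-w.valuation) := by
    rw [Padic.norm_eq_zpow_neg_valuation hw]; norm_num
  set N := w.valuation.toNat + 1 with hN
  have h1 := h N
  rw [hv] at h1
  have h2 := (zpow_le_zpow_iff_right₀ (one_lt_two (α := ℝ))).mp h1
  have h3 := Int.self_le_toNat w.valuation
  omega

open Classical in
noncomputable def aseq (g : ℤ → ℚ_[2]) (c : ℤ) : ℕ → ℤ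
  | 0 => 0
  | n+1 => if ‖g (aseq g c n)‖ ≤ (2:ℝ)^(-(((n:ℤ)+1)+c)) then aseq g c n else aseq g c n + 2^n

private lemma aseq_succ_dvd (g : ℤ → ℚ_[2]) (c : ℤ) (n : ℕ) :
    ((2:ℤ)^n : ℤ) ∣ (aseq g c (n+1) - aseq g c n) := by
  rw [aseq]
  split_ifs <;> simp

private lemma aseq_dvd (g : ℤ → ℚ_[2]) (c : ℤ) (n m : ℕ) (h : n ≤ m) :
    ((2:ℤ)^n : ℤ) ∣ (aseq g c m - aseq g c n) := by
  induction m, h using Nat.le_induction with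
  | base => simp
  | succ m hm ih =>
    have h1 : ((2:ℤ)^n : ℤ) ∣ (aseq g c (m+1) - aseq g c m) :=
      dvd_trans (pow_dvd_pow 2 hm) (aseq_succ_dvd g c m)
    have := dvd_add h1 ih
    rwa [show aseq g c (m+1) - aseq g c m + (aseq g c m - aseq g c n)
        = aseq g c (m+1) - aseq g c n by ring] at this

theorem exists_zero_of_val_increment (g : ℤ → ℚ_[2]) (c : ℤ)
    (h0 : (c : WithTop ℤ) ≤ nuQ2 (g 0))
    (hd : ∀ (x : ℤ) (d : ℕ), nuQ2 (g (x + 2 ^ d) - g x) = ((d : ℤ) + c : ℤ)) :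
    ∃ z₀ : ℤ_[2], ∀ x : ℤ,
      nuQ2 (g x) = nuQ2 ((x : ℚ_[2]) - (z₀ : ℚ_[2])) + (c : WithTop ℤ) := by
  have hnorm0 : ‖g 0‖ ≤ (2:ℝ)^(-c) := (nuQ2_le_iff _ _).mp h0
  have hdnorm : ∀ (x : ℤ) (d : ℕ), ‖g (x + 2^d) - g x‖ = (2:ℝ)^(-((d:ℤ)+c)) :=
    fun x d => (nuQ2_eq_iff _ _).mp (hd x d)
  -- telescoping estimate
  have L : ∀ (n : ℕ) (x y : ℤ), ((2:ℤ)^n : ℤ) ∣ (y - x) →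
      ‖g y - g x‖ ≤ (2:ℝ)^(-((n:ℤ)+c)) := by
    have aux : ∀ (n : ℕ) (x : ℤ) (m : ℕ),
        ‖g (x + (m:ℤ) * 2^n) - g x‖ ≤ (2:ℝ)^(-((n:ℤ)+c)) := by
      intro n x m
      induction m with
      | zero => simp; positivity
      | succ k ih =>
        have e : x + ((k+1 : ℕ):ℤ) * 2^n = (x + (k:ℤ) * 2^n) + 2^n := by push_cast; ring
        have h1 := hdnorm (x + (k:ℤ) * 2^n) n
        calc ‖g (x + ((k+1:ℕ):ℤ)*2^n) - g x‖
            = ‖(g ((x + (k:ℤ)*2^n) + 2^n) - g (x + (k:ℤ)*2^n)) + (g (x + (k:ℤ)*2^n) - g x)‖ := by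
              rw [e]; congr 1; ring
          _ ≤ max ‖g ((x + (k:ℤ)*2^n) + 2^n) - g (x + (k:ℤ)*2^n)‖ ‖g (x + (k:ℤ)*2^n) - g x‖ :=
              Padic.nonarchimedean _ _
          _ ≤ _ := max_le (le_of_eq h1) ih
    intro n x y hdv
    obtain ⟨m, hm⟩ := hdv
    rcases le_or_gt 0 m with hm0 | hm0
    · have hy : y = x + (m.toNat : ℤ) * 2^n := by
        rw [Int.toNat_of_nonneg hm0]; linarith [hm]
      rw [hy]; exact aux n x m.toNat
    · have hx : x = y + ((-m).toNat : ℤ) * 2^n := by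
        rw [Int.toNat_of_nonneg (by omega : (0:ℤ) ≤ -m)]; linarith [hm]
      rw [norm_sub_rev, hx]; exact aux n y (-m).toNat
  -- the residue characterization
  have spec : ∀ (n : ℕ) (x : ℤ),
      ‖g x‖ ≤ (2:ℝ)^(-((n:ℤ)+c)) ↔ ((2:ℤ)^n : ℤ) ∣ (x - aseq g c n) := by
    intro n
    induction n with
    | zero =>
      intro x
      simp only [Nat.cast_zero, zero_add, pow_zero]
      constructor
      · intro _; exact one_dvd _
      · intro _
        have h1 : ‖g x - g 0‖ ≤ (2:ℝ)^(-((0:ℤ)+c)) := L 0 0 x (by simp)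
        simp only [Nat.cast_zero, zero_add] at h1 ⊢
        calc ‖g x‖ = ‖(g x - g 0) + g 0‖ := by congr 1; ring
          _ ≤ max ‖g x - g 0‖ ‖g 0‖ := Padic.nonarchimedean _ _
          _ ≤ _ := max_le h1 hnorm0
    | succ n ih =>
      have hAn : ‖g (aseq g c n)‖ ≤ (2:ℝ)^(-((n:ℤ)+c)) := (ih _).mpr (by simp)
      have hstep : aseq g c (n+1) =
          if ‖g (aseq g c n)‖ ≤ (2:ℝ)^(-(((n:ℤ)+1)+c)) then aseq g c n
          else aseq g c n + 2^n := by rw [aseq]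
      have hA : ‖g (aseq g c (n+1))‖ ≤ (2:ℝ)^(-(((n:ℤ)+1)+c)) := by
        rw [hstep]; split_ifs with hcase
        · exact hcase
        · have heq : ‖g (aseq g c n)‖ = (2:ℝ)^(-((n:ℤ)+c)) :=
            discrete2 _ _ hAn (by rw [show ((n:ℤ)+c)+1 = ((n:ℤ)+1)+c by ring]; exact hcase)
          have hD := hdnorm (aseq g c n) n
          have hkey := keyA (g (aseq g c n + 2^n) - g (aseq g c n)) (-(g (aseq g c n)))
            (by rw [norm_neg, hD, heq])
          calc ‖g (aseq g c n + 2^n)‖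
              = ‖(g (aseq g c n + 2^n) - g (aseq g c n)) - (-(g (aseq g c n)))‖ := by
                congr 1; ring
            _ ≤ ‖g (aseq g c n + 2^n) - g (aseq g c n)‖ / 2 := hkey
            _ = (2:ℝ)^(-((n:ℤ)+c)) / 2 := by rw [hD]
            _ = (2:ℝ)^(-(((n:ℤ)+1)+c)) := by
                rw [show (-(((n:ℤ)+1)+c)) = -((n:ℤ)+c) - 1 by ring,
                  zpow_sub₀ (by norm_num : (2:ℝ) ≠ 0)]
                norm_num
      have hdvd1 : ((2:ℤ)^n : ℤ) ∣ (aseq g c (n+1) - aseq g c n) := aseq_succ_dvd g c n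
      intro x
      constructor
      · intro hx
        push_cast at hx
        have hx' : ‖g x‖ ≤ (2:ℝ)^(-((n:ℤ)+c)) :=
          le_trans hx (zpow_le_zpow_right₀ one_le_two (by omega))
        have h1 : ((2:ℤ)^n : ℤ) ∣ x - aseq g c n := (ih x).mp hx'
        have h2 : ((2:ℤ)^n : ℤ) ∣ x - aseq g c (n+1) := by
          have := dvd_sub h1 hdvd1
          rwa [show x - aseq g c n - (aseq g c (n+1) - aseq g c n)
              = x - aseq g c (n+1) by ring] at this
        obtain ⟨m, hm⟩ := h2
        rcases Int.even_or_odd m with ⟨k, hk⟩ | ⟨k, hk⟩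
        · exact ⟨k, by rw [hm, hk]; ring⟩
        · exfalso
          have hx2 : ((2:ℤ)^(n+1) : ℤ) ∣ (x - (aseq g c (n+1) + 2^n)) :=
            ⟨k, by rw [show x - (aseq g c (n+1) + 2^n) = (x - aseq g c (n+1)) - 2^n by ring,
              hm, hk]; ring⟩
          have hL := L (n+1) (aseq g c (n+1) + 2^n) x hx2
          push_cast at hL
          have hD := hdnorm (aseq g c (n+1)) n
          have t1 : ‖g x - g (aseq g c (n+1))‖ ≤ (2:ℝ)^(-(((n:ℤ)+1)+c)) := by
            have h9 := Padic.nonarchimedean (g x) (-(g (aseq g c (n+1))))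
            rw [← sub_eq_add_neg, norm_neg] at h9
            exact le_trans h9 (max_le hx hA)
          have t2 : ‖g (aseq g c (n+1) + 2^n) - g x‖ ≤ (2:ℝ)^(-(((n:ℤ)+1)+c)) := by
            rw [norm_sub_rev]; exact hL
          have hb : ‖g (aseq g c (n+1) + 2^n) - g (aseq g c (n+1))‖ ≤ (2:ℝ)^(-(((n:ℤ)+1)+c)) := by
            calc ‖g (aseq g c (n+1) + 2^n) - g (aseq g c (n+1))‖
                = ‖(g (aseq g c (n+1) + 2^n) - g x) + (g x - g (aseq g c (n+1)))‖ := by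
                  congr 1; ring
              _ ≤ max ‖g (aseq g c (n+1) + 2^n) - g x‖ ‖g x - g (aseq g c (n+1))‖ :=
                  Padic.nonarchimedean _ _
              _ ≤ _ := max_le t2 t1
          rw [hD] at hb
          have := (zpow_le_zpow_iff_right₀ (one_lt_two (α := ℝ))).mp hb
          omega
      · intro hx
        have hL := L (n+1) (aseq g c (n+1)) x hx
        push_cast at hL ⊢
        calc ‖g x‖ = ‖(g x - g (aseq g c (n+1))) + g (aseq g c (n+1))‖ := by congr 1; ring
          _ ≤ max ‖g x - g (aseq g c (n+1))‖ ‖g (aseq g c (n+1))‖ :=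
              Padic.nonarchimedean _ _
          _ ≤ _ := max_le hL hA
  -- the limit point
  set f : ℕ → ℚ_[2] := fun n => ((aseq g c n : ℤ) : ℚ_[2]) with hf
  have hcau : CauchySeq f := by
    apply cauchySeq_of_le_geometric (1/2 : ℝ) 1 (by norm_num)
    intro n
    rw [dist_eq_norm, norm_sub_rev]
    have : f (n+1) - f n = ((aseq g c (n+1) - aseq g c n : ℤ) : ℚ_[2]) := by
      rw [hf]; push_cast; ring
    rw [this]
    have h1 := (int_norm_le _ n).mpr (aseq_succ_dvd g c n)
    calc ‖((aseq g c (n+1) - aseq g c n : ℤ) : ℚ_[2])‖ ≤ (2:ℝ)^(-(n:ℤ)) := h1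
      _ = 1 * (1/2)^n := by
        rw [one_mul, one_div, inv_pow, ← zpow_natCast (2:ℝ), ← zpow_neg]
  obtain ⟨z, hz⟩ := cauchySeq_tendsto_of_complete hcau
  have hlim : ∀ n : ℕ, ‖(aseq g c n : ℚ_[2]) - z‖ ≤ (2:ℝ)^(-(n:ℤ)) := by
    intro n
    have ht : Filter.Tendsto (fun m => ‖(aseq g c n : ℚ_[2]) - f m‖) Filter.atTop
        (nhds ‖(aseq g c n : ℚ_[2]) - z‖) := ((hz.const_sub _).norm)
    apply le_of_tendsto ht
    filter_upwards [Filter.eventually_ge_atTop n] with m hm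
    have : (aseq g c n : ℚ_[2]) - f m = ((aseq g c n - aseq g c m : ℤ) : ℚ_[2]) := by
      rw [hf]; push_cast; ring
    rw [this, int_norm_le]
    have h2 := dvd_neg.mpr (aseq_dvd g c n m hm)
    rwa [neg_sub] at h2
  have hz1 : ‖z‖ ≤ 1 := by
    have := hlim 0
    simp only [aseq, Int.cast_zero, zero_sub, norm_neg, Nat.cast_zero, neg_zero, zpow_zero] at this
    exact this
  refine ⟨⟨z, hz1⟩, ?_⟩
  intro x
  show nuQ2 (g x) = nuQ2 ((x : ℚ_[2]) - z) + (c : WithTop ℤ)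
  have hxz_le : ∀ n : ℕ, ((2:ℤ)^n : ℤ) ∣ (x - aseq g c n) →
      ‖(x:ℚ_[2]) - z‖ ≤ (2:ℝ)^(-(n:ℤ)) := by
    intro n hdv
    calc ‖(x:ℚ_[2]) - z‖
        = ‖((x - aseq g c n : ℤ):ℚ_[2]) + ((aseq g c n : ℚ_[2]) - z)‖ := by
          congr 1; push_cast; ring
      _ ≤ max ‖((x - aseq g c n : ℤ):ℚ_[2])‖ ‖(aseq g c n : ℚ_[2]) - z‖ :=
          Padic.nonarchimedean _ _
      _ ≤ _ := max_le ((int_norm_le _ _).mpr hdv) (hlim n)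
  by_cases hall : ∀ n : ℕ, ‖g x‖ ≤ (2:ℝ)^(-((n:ℤ)+c))
  · have gx0 : g x = 0 := by
      apply norm_all_small
      intro n
      have h1 := hall (n - c).toNat
      refine le_trans h1 (zpow_le_zpow_right₀ one_le_two ?_)
      have := Int.self_le_toNat (n - c)
      omega
    have xz : (x:ℚ_[2]) - z = 0 := by
      apply norm_all_small
      intro n
      exact hxz_le n ((spec n x).mp (hall n))
    rw [gx0, xz]
    simp [nuQ2]
  · push_neg at hall
    obtain ⟨N0, hN0⟩ := hall
    have gxne : g x ≠ 0 := by
      intro h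
      rw [h, norm_zero] at hN0
      have : (0:ℝ) < 2^(-((N0:ℤ)+c)) := by positivity
      linarith
    have hnv : ‖g x‖ = (2:ℝ)^(-(g x).valuation) := by
      rw [Padic.norm_eq_zpow_neg_valuation gxne]; norm_num
    have hcv : c ≤ (g x).valuation := by
      have h1 : ‖g x‖ ≤ (2:ℝ)^(-((0:ℤ)+c)) := by
        have := (spec 0 x).mpr (by simp)
        push_cast at this
        simpa using this
      rw [hnv] at h1
      have := (zpow_le_zpow_iff_right₀ (one_lt_two (α := ℝ))).mp h1
      omega
    set n := ((g x).valuation - c).toNat with hn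
    have hnc : (n:ℤ) + c = (g x).valuation := by
      rw [hn]; omega
    have hx1 : ‖g x‖ ≤ (2:ℝ)^(-((n:ℤ)+c)) := by rw [hnv, hnc]
    have hx2 : ¬ ‖g x‖ ≤ (2:ℝ)^(-(((n:ℤ)+1)+c)) := by
      rw [hnv]
      intro h
      have := (zpow_le_zpow_iff_right₀ (one_lt_two (α := ℝ))).mp h
      omega
    have hd1 : ((2:ℤ)^n : ℤ) ∣ x - aseq g c n := (spec n x).mp hx1
    have hd2 : ¬ ((2:ℤ)^(n+1) : ℤ) ∣ x - aseq g c (n+1) := by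
      intro h
      apply hx2
      have := (spec (n+1) x).mpr h
      push_cast at this
      exact this
    have hdn1 : ((2:ℤ)^n : ℤ) ∣ x - aseq g c (n+1) := by
      have := dvd_sub hd1 (aseq_succ_dvd g c n)
      rwa [show x - aseq g c n - (aseq g c (n+1) - aseq g c n)
          = x - aseq g c (n+1) by ring] at this
    have hexact : ‖((x - aseq g c (n+1) : ℤ) : ℚ_[2])‖ = (2:ℝ)^(-(n:ℤ)) := by
      apply discrete2 _ _ ((int_norm_le _ _).mpr hdn1)
      intro h
      apply hd2
      apply (int_norm_le _ (n+1)).mp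
      push_cast at h ⊢
      exact h
    have hfinal : ‖(x:ℚ_[2]) - z‖ = (2:ℝ)^(-(n:ℤ)) := by
      have hsmall : ‖(aseq g c (n+1) : ℚ_[2]) - z‖ ≤ (2:ℝ)^(-((n:ℤ)+1)) := by
        have := hlim (n+1)
        push_cast at this
        exact this
      have hlt : ‖(aseq g c (n+1):ℚ_[2]) - z‖ < ‖((x - aseq g c (n+1):ℤ):ℚ_[2])‖ := by
        rw [hexact]
        refine lt_of_le_of_lt hsmall ?_
        exact zpow_lt_zpow_right₀ one_lt_two (by omega)
      calc ‖(x:ℚ_[2]) - z‖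
          = ‖((x - aseq g c (n+1):ℤ):ℚ_[2]) + ((aseq g c (n+1):ℚ_[2]) - z)‖ := by
            congr 1; push_cast; ring
        _ = max ‖((x - aseq g c (n+1):ℤ):ℚ_[2])‖ ‖(aseq g c (n+1):ℚ_[2]) - z‖ :=
            Padic.add_eq_max_of_ne (ne_of_gt hlt)
        _ = ‖((x - aseq g c (n+1):ℤ):ℚ_[2])‖ := max_eq_left hlt.le
        _ = _ := hexact
    rw [show nuQ2 (g x) = (((n:ℤ) + c : ℤ) : WithTop ℤ) from
        (nuQ2_eq_iff _ _).mpr (by rw [hnv, hnc]),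
      show nuQ2 ((x:ℚ_[2]) - z) = (((n:ℤ) : ℤ) : WithTop ℤ) from
        (nuQ2_eq_iff _ _).mpr hfinal]
    exact_mod_cast rfl
end

section
/- Let $e = \lfloor \log_2(n-1)\rfloor$ and suppose $3\cdot 2^{e-1} < n < 2^{e+1}$, $0 \le p \le \lfloor (n - 3\cdot 2^{e-1})/2 \rfloor$ with $p < \lfloor (n-3\cdot 2^{e-1})/2\rfloor$, $\binom{n-1-p}{p}$ is odd, and $p < 2^h < 2^e$. Then $\binom{n-1-p-2^e+2^h}{p+2^e-2^h}$ is odd if and only if $h = \lfloor \log_2(2^{e+1} - n + p)\rfloor$. -/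
lemma odd_choose_bits (M K : ℕ) : Odd (Nat.choose M K) ↔
    ∀ i, K.testBit i = true → M.testBit i = true := by
  induction M using Nat.strong_induction_on generalizing K with
  | _ M ih =>
  rcases Nat.eq_zero_or_pos M with rfl | hM
  · constructor
    · intro hodd i hbit
      rcases Nat.eq_zero_or_pos K with rfl | hK
      · simp at hbit
      · simp [Nat.choose_eq_zero_of_lt hK] at hodd
    · intro hall
      have hK : K = 0 := Nat.eq_of_testBit_eq fun i => by
        simp only [Nat.zero_testBit]
        by_contra hc
        have := hall i (by simpa using hc)
        simp at this
      subst hK; simp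
  · have key : Nat.choose M K % 2 =
        (Nat.choose (M % 2) (K % 2) * Nat.choose (M / 2) (K / 2)) % 2 :=
      Choose.choose_modEq_choose_mod_mul_choose_div_nat (p := 2)
    rw [Nat.odd_iff, key, ← Nat.odd_iff, Nat.odd_mul,
      ih (M / 2) (Nat.div_lt_self hM one_lt_two) (K / 2)]
    have hfirst : Odd (Nat.choose (M % 2) (K % 2)) ↔
        (K.testBit 0 = true → M.testBit 0 = true) := by
      rcases Nat.mod_two_eq_zero_or_one M with hm | hm <;>
        rcases Nat.mod_two_eq_zero_or_one K with hk | hk <;>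
        simp [hm, hk]
    rw [hfirst]
    constructor
    · rintro ⟨h0, hrest⟩ i
      cases i with
      | zero => exact h0
      | succ j =>
        rw [Nat.testBit_add_one, Nat.testBit_add_one]
        exact hrest j
    · intro hall
      refine ⟨hall 0, fun j => ?_⟩
      rw [← Nat.testBit_add_one K j, ← Nat.testBit_add_one M j]
      exact hall (j + 1)

theorem odd_choose_iff (n p h e : ℕ)
    (hev : e = Nat.log 2 (n - 1))
    (hn1 : 3 * 2 ^ (e - 1) < n) (hn2 : n < 2 ^ (e + 1))
    (hp : p < (n - 3 * 2 ^ (e - 1)) / 2)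
    (hodd : Odd (Nat.choose (n - 1 - p) p))
    (hh1 : p < 2 ^ h) (hh2 : 2 ^ h < 2 ^ e) :
    Odd (Nat.choose (n - 1 - p - 2 ^ e + 2 ^ h) (p + 2 ^ e - 2 ^ h)) ↔
      h = Nat.log 2 (2 ^ (e + 1) - n + p) := by
  clear hev
  obtain ⟨E, rfl⟩ : ∃ E, e = E + 1 := by
    rcases e with _ | E
    · exfalso; norm_num at hn1 hn2; omega
    · exact ⟨E, rfl⟩
  simp only [Nat.add_sub_cancel] at hn1 hp
  have hhE : h ≤ E := by
    have := (Nat.pow_lt_pow_iff_right (a := 2) one_lt_two).mp hh2; omega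
  have e1 : 2 ^ (E + 1) = 2 * 2 ^ E := by rw [pow_succ]; ring
  have e2 : 2 ^ (E + 1 + 1) = 4 * 2 ^ E := by rw [pow_succ, pow_succ]; ring
  have eT : 2 ^ (h + 1) = 2 * 2 ^ h := by rw [pow_succ]; ring
  have hTP : 2 ^ h ≤ 2 ^ E := Nat.pow_le_pow_right (by norm_num) hhE
  have hT1 : 1 ≤ 2 ^ h := Nat.one_le_two_pow
  have hadd1 : h + (E + 1 - h) = E + 1 := by omega
  have hadd2 : h + 1 + (E + 1 - h) = E + 1 + 1 := by omega
  have hD1 : 2 ^ h * (2 ^ (E + 1 - h) - 1) = 2 ^ (E + 1) - 2 ^ h := by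
    rw [Nat.mul_sub, mul_one, ← pow_add, hadd1]
  have hD2 : 2 ^ (h + 1) * (2 ^ (E + 1 - h) - 1) = 2 ^ (E + 1 + 1) - 2 ^ (h + 1) := by
    rw [Nat.mul_sub, mul_one, ← pow_add, hadd2]
  have hr0 : 2 ^ (E + 1 + 1) - n + p ≠ 0 := by omega
  have hlog : (h = Nat.log 2 (2 ^ (E + 1 + 1) - n + p)) ↔
      (2 ^ h ≤ 2 ^ (E + 1 + 1) - n + p ∧ 2 ^ (E + 1 + 1) - n + p < 2 ^ (h + 1)) := by
    rw [eq_comm, Nat.log_eq_iff (Or.inr ⟨one_lt_two, hr0⟩)]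
  have hsub := (odd_choose_bits (n - 1 - p) p).mp hodd
  have hb : p + 2 ^ (E + 1) - 2 ^ h = 2 ^ h * (2 ^ (E + 1 - h) - 1) + p := by omega
  rw [hb, odd_choose_bits, hlog]
  constructor
  · intro cond
    have habits : ∀ i, h ≤ i → i ≤ E →
        (n - 1 - p - 2 ^ (E + 1) + 2 ^ h).testBit i = true := by
      intro i hi1 hi2
      apply cond
      rw [Nat.testBit_two_pow_mul_add _ hh1 i]
      rw [if_neg (by omega), Nat.testBit_two_pow_sub_one]
      simp; omega
    have haub : n - 1 - p - 2 ^ (E + 1) + 2 ^ h < 2 ^ (E + 1) := by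
      by_contra hc
      push_neg at hc
      have hw : n - 1 - p - 2 ^ (E + 1) + 2 ^ h - 2 ^ (E + 1) < 2 ^ E := by omega
      have ha2 : n - 1 - p - 2 ^ (E + 1) + 2 ^ h =
          2 ^ (E + 1) * 1 + (n - 1 - p - 2 ^ (E + 1) + 2 ^ h - 2 ^ (E + 1)) := by omega
      have hfalse : (n - 1 - p - 2 ^ (E + 1) + 2 ^ h).testBit E = false := by
        rw [ha2, Nat.testBit_two_pow_mul_add _ (show _ < 2 ^ (E+1) by omega) E,
          if_pos (by omega)]
        exact Nat.testBit_lt_two_pow hw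
      have htrue := habits E hhE le_rfl
      rw [hfalse] at htrue
      exact Bool.false_ne_true htrue
    have halb : 2 ^ (E + 1) - 2 ^ h ≤ n - 1 - p - 2 ^ (E + 1) + 2 ^ h := by
      apply Nat.le_of_testBit
      intro i hbit
      rw [← hD1, Nat.testBit_two_pow_mul] at hbit
      simp only [Bool.and_eq_true, decide_eq_true_eq, Nat.testBit_two_pow_sub_one] at hbit
      exact habits i hbit.1 (by omega)
    exact ⟨by omega, by omega⟩
  · rintro ⟨hr1, hr2⟩ i hbi
    set s := (n - 1 - p) - (2 ^ (E + 1 + 1) - 2 ^ (h + 1)) with hsdef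
    have hs : s < 2 ^ h := by omega
    have hs2 : s < 2 ^ (h + 1) := by omega
    have ha : n - 1 - p - 2 ^ (E + 1) + 2 ^ h = 2 ^ h * (2 ^ (E + 1 - h) - 1) + s := by omega
    have hm : n - 1 - p = 2 ^ (h + 1) * (2 ^ (E + 1 - h) - 1) + s := by omega
    rw [Nat.testBit_two_pow_mul_add _ hh1 i] at hbi
    rw [ha, Nat.testBit_two_pow_mul_add _ hs i]
    by_cases hi : i < h
    · rw [if_pos hi] at hbi ⊢
      have := hsub i hbi
      rw [hm, Nat.testBit_two_pow_mul_add _ hs2 i, if_pos (by omega)] at this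
      exact this
    · rw [if_neg hi] at hbi ⊢
      exact hbi
end
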